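/- arXiv:2601.05797 — 4 statements merged into one kernel-verified Lean document; each statement's English description precedes it below -/
import Mathlib

section
/- If a is an element of the left nucleus (or middle nucleus, or right nucleus) of a unital non-associative algebra S, then the subalgebra of S generated by a is associative. -/
/-- The left nucleus: elements `a` with `a*(b*c) = (a*b)*c` for all `b, c`. -/
def leftNucleus (S : Type*) [NonAssocRing S] : Set S :=
  {a | ∀ b c : S, a * (b * c) = (a * b) * c}

/-- The middle nucleus. -/
def middleNucleus (S : Type*) [NonAssocRing S] : Set S :=
  {b | ∀ a c : S, (a * b) * c = a * (b * c)}

/-- The right nucleus. -/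
def rightNucleus (S : Type*) [NonAssocRing S] : Set S :=
  {c | ∀ a b : S, (a * b) * c = a * (b * c)}

def leftNucleusSubalg (K S : Type*) [Field K] [NonAssocRing S]
    [Module K S] [SMulCommClass K S S] [IsScalarTower K S S] :
    NonUnitalSubalgebra K S where
  carrier := leftNucleus S
  add_mem' hx hy b c := by
    simp only [leftNucleus, Set.mem_setOf_eq] at *
    simp [add_mul, hx, hy]
  zero_mem' b c := by simp
  mul_mem' {x y} hx hy b c := by
    simp only [leftNucleus, Set.mem_setOf_eq] at *
    rw [← hx y (b * c), hy b c, hx (y * b) c, hx y b]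
  smul_mem' k x hx b c := by
    simp only [leftNucleus, Set.mem_setOf_eq] at *
    rw [smul_mul_assoc, smul_mul_assoc, smul_mul_assoc, hx]

def middleNucleusSubalg (K S : Type*) [Field K] [NonAssocRing S]
    [Module K S] [SMulCommClass K S S] [IsScalarTower K S S] :
    NonUnitalSubalgebra K S where
  carrier := middleNucleus S
  add_mem' hx hy b c := by
    simp only [middleNucleus, Set.mem_setOf_eq] at *
    simp [add_mul, mul_add, hx, hy]
  zero_mem' b c := by simp
  mul_mem' {x y} hx hy b c := by
    simp only [middleNucleus, Set.mem_setOf_eq] at *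
    rw [← hx b y, hy (b * x) c, hx b (y * c), hy x c]
  smul_mem' k x hx b c := by
    simp only [middleNucleus, Set.mem_setOf_eq] at *
    simp [mul_smul_comm, smul_mul_assoc, hx]

def rightNucleusSubalg (K S : Type*) [Field K] [NonAssocRing S]
    [Module K S] [SMulCommClass K S S] [IsScalarTower K S S] :
    NonUnitalSubalgebra K S where
  carrier := rightNucleus S
  add_mem' hx hy b c := by
    simp only [rightNucleus, Set.mem_setOf_eq] at *
    simp [mul_add, hx, hy]
  zero_mem' b c := by simp
  mul_mem' {x y} hx hy b c := by
    simp only [rightNucleus, Set.mem_setOf_eq] at *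
    rw [← hy (b * c) x, hx b c, hy b (c * x), ← hy c x]
  smul_mem' k x hx b c := by
    simp only [rightNucleus, Set.mem_setOf_eq] at *
    rw [mul_smul_comm, mul_smul_comm, mul_smul_comm, hx]

/-- If `a` lies in the left nucleus (or middle nucleus, or right nucleus) of a unital
non-associative algebra `S`, then the subalgebra of `S` generated by `a` (the smallest
subalgebra containing `a` and `1`) is associative. -/
theorem adjoin_self_associative {K S : Type*} [Field K] [NonAssocRing S]
    [Module K S] [SMulCommClass K S S] [IsScalarTower K S S]
    (a : S) (ha : a ∈ leftNucleus S ∪ middleNucleus S ∪ rightNucleus S) :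
    ∀ x ∈ NonUnitalAlgebra.adjoin K ({1, a} : Set S),
      ∀ y ∈ NonUnitalAlgebra.adjoin K ({1, a} : Set S),
        ∀ z ∈ NonUnitalAlgebra.adjoin K ({1, a} : Set S),
          (x * y) * z = x * (y * z) := by
  have one_l : (1 : S) ∈ leftNucleus S := fun b c => by simp
  have one_m : (1 : S) ∈ middleNucleus S := fun b c => by simp
  have one_r : (1 : S) ∈ rightNucleus S := fun b c => by simp
  intro x hx y hy z hz
  rcases ha with (hal | ham) | har
  · have hle : NonUnitalAlgebra.adjoin K ({1, a} : Set S) ≤ leftNucleusSubalg K S :=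
      NonUnitalAlgebra.adjoin_le (by
        intro s hs
        rcases hs with rfl | rfl
        · exact one_l
        · exact hal)
    exact (hle hx y z).symm
  · have hle : NonUnitalAlgebra.adjoin K ({1, a} : Set S) ≤ middleNucleusSubalg K S :=
      NonUnitalAlgebra.adjoin_le (by
        intro s hs
        rcases hs with rfl | rfl
        · exact one_m
        · exact ham)
    exact hle hy x z
  · have hle : NonUnitalAlgebra.adjoin K ({1, a} : Set S) ≤ rightNucleusSubalg K S :=
      NonUnitalAlgebra.adjoin_le (by
        intro s hs
        rcases hs with rfl | rfl
        · exact one_r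
        · exact har)
    exact hle hz x y
end

section
/- Let S be a K-algebra with pseudo-degree function χ, let a ∈ N(S) with m = χ(a) > 0, and suppose C_S(a) satisfies condition D(ℓ). Then C_S(a) is a free left K[a]-module of rank at most ℓm. -/
/-- A pseudo-degree function on a (not necessarily associative) algebra `S`. -/
def IsPseudoDegree {S : Type*} [NonAssocRing S] (χ : S → WithBot ℤ) : Prop :=
  (∀ a : S, χ a = ⊥ ↔ a = 0) ∧
  (∀ a b : S, χ (a * b) = χ a + χ b) ∧
  (∀ a b : S, χ (a + b) ≤ max (χ a) (χ b))

/-- The nucleus of `S`. -/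
def nucleus (S : Type*) [NonAssocRing S] : Set S :=
  {a | (∀ b c : S, a * (b * c) = (a * b) * c) ∧
       (∀ b c : S, (b * a) * c = b * (a * c)) ∧
       (∀ b c : S, (b * c) * a = b * (c * a))}

/-- The centralizer of `a` in `S`. -/
def centralizer {S : Type*} [NonAssocRing S] (a : S) : Set S :=
  {b | a * b = b * a}

/-- Condition `D(ℓ)` for a subset `B` of `S` with respect to a pseudo-degree function
`χ`: every nonzero element of `B` has `χ`-value `≥ 0`, and whenever `ℓ + 1` elements
of `B` are all mapped to the same integer by `χ`, some nontrivial `K`-linear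
combination of them has strictly smaller `χ`-value. -/
def CondD (K : Type*) {S : Type*} [Field K] [NonAssocRing S] [Module K S]
    (χ : S → WithBot ℤ) (B : Set S) (ℓ : ℕ) : Prop :=
  (∀ b ∈ B, b ≠ 0 → 0 ≤ χ b) ∧
  ∀ (f : Fin (ℓ + 1) → S) (n : ℤ), (∀ i, f i ∈ B) →
    (∀ i, χ (f i) = (n : WithBot ℤ)) →
    ∃ c : Fin (ℓ + 1) → K, (∃ i, c i ≠ 0) ∧
      χ (∑ i, c i • f i) < (n : WithBot ℤ)

/-- Powers of an element of a non-associative unital ring. -/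
def apow {S : Type*} [NonAssocRing S] (a : S) : ℕ → S
  | 0 => 1
  | n + 1 => a * apow a n

/-- Evaluation of a polynomial `p ∈ K[x]` at an element `a` of a non-associative
`K`-algebra; for `a` in the nucleus this is the usual evaluation in `K[a]`. -/
noncomputable def evalAt {K S : Type*} [Field K] [NonAssocRing S] [Module K S]
    (a : S) (p : Polynomial K) : S :=
  p.sum fun i c => c • apow a i

set_option linter.unusedSectionVars false
section Part1
variable {K S : Type*} [Field K] [NonAssocRing S] [Module K S]
  [SMulCommClass K S S] [IsScalarTower K S S]

namespace NucAux

theorem one_mem_nucleus : (1 : S) ∈ nucleus S := by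
  refine ⟨?_, ?_, ?_⟩ <;> intro b c <;> simp

theorem add_mem_nucleus {u v : S} (hu : u ∈ nucleus S) (hv : v ∈ nucleus S) :
    u + v ∈ nucleus S := by
  obtain ⟨hu1, hu2, hu3⟩ := hu
  obtain ⟨hv1, hv2, hv3⟩ := hv
  refine ⟨fun b c => ?_, fun b c => ?_, fun b c => ?_⟩
  · simp only [add_mul]; rw [hu1, hv1]
  · simp only [mul_add, add_mul]; rw [hu2, hv2]
  · simp only [mul_add]; rw [hu3, hv3]

theorem smul_mem_nucleus {u : S} (hu : u ∈ nucleus S) (κ : K) :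
    κ • u ∈ nucleus S := by
  obtain ⟨hu1, hu2, hu3⟩ := hu
  refine ⟨fun b c => ?_, fun b c => ?_, fun b c => ?_⟩
  · rw [smul_mul_assoc, smul_mul_assoc, smul_mul_assoc, hu1]
  · rw [mul_smul_comm, smul_mul_assoc, smul_mul_assoc, mul_smul_comm, hu2]
  · rw [mul_smul_comm, mul_smul_comm, mul_smul_comm, hu3]

theorem mul_mem_nucleus {u v : S} (hu : u ∈ nucleus S) (hv : v ∈ nucleus S) :
    u * v ∈ nucleus S := by
  obtain ⟨hu1, hu2, hu3⟩ := hu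
  obtain ⟨hv1, hv2, hv3⟩ := hv
  refine ⟨fun b c => ?_, fun b c => ?_, fun b c => ?_⟩
  · rw [← hu1 v (b*c), hv1 b c, hu1 (v*b) c, hu1 v b]
  · rw [← hv3 b u, hv2 (b*u) c, hu2 b (v*c), hu1 v c]
  · rw [← hv3 (b*c) u, hu3 b c, hv3 b (c*u), hv3 c u]

theorem zero_mem_nucleus : (0 : S) ∈ nucleus S := by
  refine ⟨?_, ?_, ?_⟩ <;> intro b c <;> simp

theorem apow_mem_nucleus {a : S} (ha : a ∈ nucleus S) (n : ℕ) :
    apow a n ∈ nucleus S := by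
  induction n with
  | zero => exact one_mem_nucleus
  | succ n ih => exact mul_mem_nucleus ha ih

theorem apow_comm {a : S} (ha : a ∈ nucleus S) (n : ℕ) :
    a * apow a n = apow a n * a := by
  obtain ⟨ha1, ha2, ha3⟩ := ha
  induction n with
  | zero => simp [apow]
  | succ n ih =>
    show a * (a * apow a n) = (a * apow a n) * a
    rw [ih, ha1, ih]

theorem apow_mem_centralizer {a : S} (ha : a ∈ nucleus S) (n : ℕ) :
    apow a n ∈ centralizer a := apow_comm ha n

theorem apow_add {a : S} (ha : a ∈ nucleus S) (i j : ℕ) :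
    apow a (i + j) = apow a i * apow a j := by
  induction i with
  | zero => simp [apow]
  | succ i ih =>
    have : i + 1 + j = (i + j) + 1 := by omega
    rw [this]
    show a * apow a (i + j) = (a * apow a i) * apow a j
    rw [ih, ha.1 (apow a i) (apow a j)]

end NucAux

namespace EvalAux

open NucAux Polynomial

theorem evalAt_monomial (a : S) (n : ℕ) (c : K) :
    evalAt a (monomial n c : Polynomial K) = c • apow a n := by
  unfold evalAt
  rw [Polynomial.sum_monomial_index]
  simp

theorem evalAt_add (a : S) (p q : Polynomial K) :
    evalAt a (p + q) = evalAt a p + evalAt a q := by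
  unfold evalAt
  rw [Polynomial.sum_add_index] <;> simp [add_smul]

theorem evalAt_zero (a : S) : evalAt a (0 : Polynomial K) = 0 := by
  simp [evalAt]

theorem evalAt_one (a : S) : evalAt a (1 : Polynomial K) = 1 := by
  have : (1 : Polynomial K) = monomial 0 (1 : K) := by simp
  rw [this, evalAt_monomial]
  rw [show apow a 0 = (1:S) from rfl, one_smul]

theorem evalAt_C (a : S) (c : K) : evalAt a (C c) = c • (1 : S) := by
  have : (C c : Polynomial K) = monomial 0 c := by simp
  rw [this, evalAt_monomial]; rfl

theorem evalAt_X (a : S) : evalAt a (X : Polynomial K) = a := by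
  have : (X : Polynomial K) = monomial 1 1 := (Polynomial.monomial_one_one_eq_X).symm
  rw [this, evalAt_monomial]
  show (1:K) • (a * apow a 0) = a
  rw [show apow a 0 = (1:S) from rfl, mul_one, one_smul]

theorem evalAt_mul {a : S} (ha : a ∈ nucleus S) (p q : Polynomial K) :
    evalAt a (p * q) = evalAt a p * evalAt a q := by
  induction p using Polynomial.induction_on' with
  | add f g hf hg => rw [add_mul, evalAt_add, evalAt_add, add_mul, hf, hg]
  | monomial i c =>
    induction q using Polynomial.induction_on' with
    | add f g hf hg => rw [mul_add, evalAt_add, evalAt_add, mul_add, hf, hg]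
    | monomial j d =>
      rw [monomial_mul_monomial, evalAt_monomial, evalAt_monomial, evalAt_monomial,
        apow_add ha, mul_smul, smul_mul_assoc, mul_smul_comm]

theorem evalAt_mem_nucleus {a : S} (ha : a ∈ nucleus S) (p : Polynomial K) :
    evalAt a p ∈ nucleus S := by
  induction p using Polynomial.induction_on' with
  | add f g hf hg => rw [evalAt_add]; exact add_mem_nucleus hf hg
  | monomial i c => rw [evalAt_monomial]; exact smul_mem_nucleus (apow_mem_nucleus ha i) c

theorem smul_mem_centralizer {a c : S} (hc : c ∈ centralizer a) (κ : K) :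
    κ • c ∈ centralizer a := by
  show a * κ • c = κ • c * a
  rw [mul_smul_comm, smul_mul_assoc, hc]

theorem add_mem_centralizer {a c d : S} (hc : c ∈ centralizer a) (hd : d ∈ centralizer a) :
    c + d ∈ centralizer a := by
  show a * (c + d) = (c + d) * a
  rw [mul_add, add_mul, hc, hd]

theorem zero_mem_centralizer (a : S) : (0 : S) ∈ centralizer a := by
  show a * 0 = 0 * a; simp

theorem one_mem_centralizer (a : S) : (1 : S) ∈ centralizer a := by
  show a * 1 = 1 * a; simp

theorem evalAt_mem_centralizer {a : S} (ha : a ∈ nucleus S) (p : Polynomial K) :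
    evalAt a p ∈ centralizer a := by
  induction p using Polynomial.induction_on' with
  | add f g hf hg => rw [evalAt_add]; exact add_mem_centralizer hf hg
  | monomial i c =>
    rw [evalAt_monomial]; exact smul_mem_centralizer (apow_mem_centralizer ha i) c

/-- `p(a) * c` stays in the centralizer of `a`. -/
theorem evalAt_mul_mem_centralizer {a c : S} (ha : a ∈ nucleus S) (hc : c ∈ centralizer a)
    (p : Polynomial K) : evalAt a p * c ∈ centralizer a := by
  have hce : a * evalAt a p = evalAt a p * a := evalAt_mem_centralizer ha p
  have hcc : a * c = c * a := hc
  obtain ⟨ha1, ha2, ha3⟩ := ha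
  show a * (evalAt a p * c) = (evalAt a p * c) * a
  rw [ha1 (evalAt a p) c, hce, ha2 (evalAt a p) c, hcc, ← ha3 (evalAt a p) c]

theorem mul_mem_centralizer {a c : S} (ha : a ∈ nucleus S) (hc : c ∈ centralizer a) :
    a * c ∈ centralizer a := by
  have hcc : a * c = c * a := hc
  obtain ⟨ha1, ha2, ha3⟩ := ha
  show a * (a * c) = (a * c) * a
  rw [ha3 a c, ← hcc]

theorem sum_mem_centralizer {a : S} {ι : Type*} {s : Finset ι} {f : ι → S}
    (h : ∀ i ∈ s, f i ∈ centralizer a) : (∑ i ∈ s, f i) ∈ centralizer a := by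
  classical
  induction s using Finset.induction_on with
  | empty => simpa using zero_mem_centralizer a
  | @insert x t hx ih =>
    rw [Finset.sum_insert hx]
    exact add_mem_centralizer (h x (Finset.mem_insert_self x t))
      (ih fun i hi => h i (Finset.mem_insert_of_mem hi))

end EvalAux
end Part1

section Part2
open NucAux EvalAux Polynomial
set_option linter.unusedSectionVars false

variable {K S : Type*} [Field K] [NonAssocRing S] [Module K S]
  [SMulCommClass K S S] [IsScalarTower K S S]
variable {χ : S → WithBot ℤ} (hχ : IsPseudoDegree χ)
  {a : S} {ℓ : ℕ} (hD : CondD K χ (centralizer a) ℓ)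

namespace ChiAux

include hχ in
theorem chi_zero : χ (0 : S) = ⊥ := (hχ.1 0).2 rfl

include hχ in
theorem chi_ne_bot {x : S} (hx : x ≠ 0) : χ x ≠ ⊥ := fun h => hx ((hχ.1 x).1 h)

include hχ in
theorem chi_one (h1 : (1 : S) ≠ 0) : χ (1 : S) = 0 := by
  have h := hχ.2.1 1 1
  rw [one_mul] at h
  obtain ⟨z, hz⟩ := WithBot.ne_bot_iff_exists.1 (chi_ne_bot hχ h1)
  rw [← hz] at h ⊢
  have hz2 : z = z + z := by exact_mod_cast h
  have : z = 0 := by omega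
  rw [this]; rfl

include hχ hD in
theorem chi_smul_one (h1 : (1 : S) ≠ 0) {κ : K} (hκ : κ ≠ 0) :
    χ (κ • (1 : S)) = 0 := by
  have hu : κ • (1 : S) ∈ centralizer a := smul_mem_centralizer (one_mem_centralizer a) κ
  have hv : κ⁻¹ • (1 : S) ∈ centralizer a := smul_mem_centralizer (one_mem_centralizer a) κ⁻¹
  have hu0 : κ • (1 : S) ≠ 0 := by
    intro h; exact h1 (by simpa [hκ] using (smul_eq_zero.1 h))
  have hv0 : κ⁻¹ • (1 : S) ≠ 0 := by
    intro h; exact h1 (by simpa [inv_eq_zero, hκ] using (smul_eq_zero.1 h))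
  have h0u : 0 ≤ χ (κ • (1 : S)) := hD.1 _ hu hu0
  have h0v : 0 ≤ χ (κ⁻¹ • (1 : S)) := hD.1 _ hv hv0
  have hmul : (κ • (1 : S)) * (κ⁻¹ • (1 : S)) = 1 := by
    rw [smul_mul_assoc, mul_smul_comm, smul_smul, mul_inv_cancel₀ hκ, one_smul, one_mul]
  have hsum : χ (κ • (1 : S)) + χ (κ⁻¹ • (1 : S)) = 0 := by
    rw [← hχ.2.1, hmul, chi_one hχ h1]
  obtain ⟨z, hz⟩ := WithBot.ne_bot_iff_exists.1 (chi_ne_bot hχ hu0)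
  obtain ⟨w, hw⟩ := WithBot.ne_bot_iff_exists.1 (chi_ne_bot hχ hv0)
  rw [← hz] at h0u ⊢; rw [← hw] at h0v
  rw [← hz, ← hw] at hsum
  have hz' : (0:ℤ) ≤ z := by exact_mod_cast h0u
  have hw' : (0:ℤ) ≤ w := by exact_mod_cast h0v
  have hs' : z + w = 0 := by exact_mod_cast hsum
  have : z = 0 := by omega
  rw [this]; rfl

include hχ hD in
theorem chi_smul (h1 : (1 : S) ≠ 0) {κ : K} (hκ : κ ≠ 0) (x : S) :
    χ (κ • x) = χ x := by
  have : κ • x = (κ • (1 : S)) * x := by rw [smul_mul_assoc, one_mul]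
  rw [this, hχ.2.1, chi_smul_one hχ hD h1 hκ, zero_add]

include hχ hD in
theorem chi_smul_le (h1 : (1 : S) ≠ 0) (κ : K) (x : S) :
    χ (κ • x) ≤ χ x := by
  rcases eq_or_ne κ 0 with h | h
  · rw [h, zero_smul, chi_zero hχ]; exact bot_le
  · rw [chi_smul hχ hD h1 h]

include hχ hD in
theorem chi_neg (h1 : (1 : S) ≠ 0) (x : S) : χ (-x) = χ x := by
  have : -x = (-1 : K) • x := by rw [neg_smul, one_smul]
  rw [this, chi_smul hχ hD h1 (by norm_num)]

include hχ hD in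
theorem chi_add_eq (h1 : (1 : S) ≠ 0) {x y : S} (h : χ y < χ x) :
    χ (x + y) = χ x := by
  apply le_antisymm
  · exact le_trans (hχ.2.2 x y) (by rw [max_eq_left h.le])
  · have h2 := hχ.2.2 (x + y) (-y)
    rw [add_neg_cancel_right, chi_neg hχ hD h1] at h2
    rcases le_max_iff.1 h2 with h3 | h3
    · exact h3
    · exact absurd h3 (not_le.2 h)

include hχ in
theorem chi_sum_le {ι : Type*} (s : Finset ι) (f : ι → S) (n : WithBot ℤ)
    (h : ∀ i ∈ s, χ (f i) ≤ n) : χ (∑ i ∈ s, f i) ≤ n := by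
  classical
  induction s using Finset.induction_on with
  | empty => rw [Finset.sum_empty, chi_zero hχ]; exact bot_le
  | @insert x t hx ih =>
    rw [Finset.sum_insert hx]
    refine le_trans (hχ.2.2 _ _) (max_le (h x (Finset.mem_insert_self x t)) ?_)
    exact ih fun i hi => h i (Finset.mem_insert_of_mem hi)

variable {m : ℕ} (hm : χ a = ((m : ℤ) : WithBot ℤ))

include hχ hm in
theorem chi_apow (h1 : (1 : S) ≠ 0) (n : ℕ) :
    χ (apow a n) = (((n * m : ℕ) : ℤ) : WithBot ℤ) := by
  induction n with
  | zero => show χ (1 : S) = _; simpa using chi_one hχ h1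
  | succ n ih =>
    show χ (a * apow a n) = _
    rw [hχ.2.1, hm, ih]
    rw [← WithBot.coe_add]
    norm_cast
    ring

include hχ hD hm in
theorem chi_evalAt_aux (h1 : (1 : S) ≠ 0) (hmpos : 0 < m) :
    ∀ d : ℕ, ∀ p : Polynomial K, p ≠ 0 → p.natDegree ≤ d →
      χ (evalAt a p) = (((m * p.natDegree : ℕ) : ℤ) : WithBot ℤ) := by
  intro d
  induction d with
  | zero =>
    intro p hp hdeg
    have h0 : p.natDegree = 0 := Nat.le_zero.1 hdeg
    have hc : p = C (p.coeff 0) := Polynomial.eq_C_of_natDegree_eq_zero h0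
    have hc0 : p.coeff 0 ≠ 0 := by
      intro h; exact hp (by rw [hc, h, map_zero])
    rw [hc, evalAt_C, chi_smul hχ hD h1 hc0, chi_one hχ h1]
    simp
  | succ d ih =>
    intro p hp hdeg
    rcases Nat.lt_or_ge p.natDegree (d+1) with h | h
    · exact ih p hp (by omega)
    have hdeq : p.natDegree = d + 1 := by omega
    have hlc : p.leadingCoeff ≠ 0 := Polynomial.leadingCoeff_ne_zero.2 hp
    have hmon : χ (evalAt a (monomial p.natDegree p.leadingCoeff)) =
        (((m * p.natDegree : ℕ) : ℤ) : WithBot ℤ) := by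
      rw [evalAt_monomial, chi_smul hχ hD h1 hlc, chi_apow hχ hm h1]
      norm_cast; ring
    rcases eq_or_ne p.eraseLead 0 with he | he
    · have hpm : p = monomial p.natDegree p.leadingCoeff := by
        conv_lhs => rw [← Polynomial.eraseLead_add_monomial_natDegree_leadingCoeff p]
        rw [he, zero_add]
      have heq : evalAt a p = evalAt a (monomial p.natDegree p.leadingCoeff) := by
        rw [← hpm]
      rw [heq]; exact hmon
    · have hed : p.eraseLead.natDegree < p.natDegree := by
        have := Polynomial.eraseLead_natDegree_le p
        omega
      have hee : χ (evalAt a p.eraseLead) =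
          (((m * p.eraseLead.natDegree : ℕ) : ℤ) : WithBot ℤ) :=
        ih p.eraseLead he (by omega)
      have hlt : χ (evalAt a p.eraseLead) < χ (evalAt a (monomial p.natDegree p.leadingCoeff)) := by
        rw [hee, hmon]
        have : m * p.eraseLead.natDegree < m * p.natDegree :=
          (Nat.mul_lt_mul_left hmpos).2 hed
        exact_mod_cast this
      have hsplit : evalAt a p =
          evalAt a (monomial p.natDegree p.leadingCoeff) + evalAt a p.eraseLead := by
        conv_lhs => rw [← Polynomial.eraseLead_add_monomial_natDegree_leadingCoeff p]
        rw [evalAt_add, add_comm]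
      rw [hsplit, chi_add_eq hχ hD h1 hlt, hmon]

include hχ hD hm in
theorem chi_evalAt (h1 : (1 : S) ≠ 0) (hmpos : 0 < m) {p : Polynomial K} (hp : p ≠ 0) :
    χ (evalAt a p) = (((m * p.natDegree : ℕ) : ℤ) : WithBot ℤ) :=
  chi_evalAt_aux hχ hD hm h1 hmpos p.natDegree p hp le_rfl

include hχ hD hm in
theorem evalAt_ne_zero (h1 : (1 : S) ≠ 0) (hmpos : 0 < m) {p : Polynomial K} (hp : p ≠ 0) :
    evalAt a p ≠ 0 := by
  intro h
  have h2 := chi_evalAt hχ hD hm h1 hmpos hp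
  rw [h, chi_zero hχ] at h2
  exact WithBot.bot_ne_coe h2

include hχ hD in
theorem chi_mem_nat {c : S} (hc : c ∈ centralizer a) (hc0 : c ≠ 0) :
    ∃ n : ℕ, χ c = ((n : ℤ) : WithBot ℤ) := by
  have h0 : 0 ≤ χ c := hD.1 _ hc hc0
  obtain ⟨z, hz⟩ := WithBot.ne_bot_iff_exists.1 (chi_ne_bot hχ hc0)
  rw [← hz] at h0 ⊢
  have hz' : (0:ℤ) ≤ z := by exact_mod_cast h0
  exact ⟨z.toNat, by norm_cast; omega⟩

end ChiAux
end Part2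

section Part3
open NucAux EvalAux ChiAux Polynomial Module Submodule
set_option linter.unusedSectionVars false
set_option maxHeartbeats 1000000

variable {K S : Type*} [Field K] [NonAssocRing S] [Module K S]
  [SMulCommClass K S S] [IsScalarTower K S S]
variable (χ : S → WithBot ℤ) (a : S) {ℓ m : ℕ}

/-- Truncation helper. -/
theorem wb_le_pred {x : WithBot ℤ} {n : ℤ} (h : x < (n : WithBot ℤ)) :
    x ≤ ((n - 1 : ℤ) : WithBot ℤ) := by
  cases x with
  | bot => exact bot_le
  | coe z =>
    have : z < n := by exact_mod_cast h
    exact_mod_cast (by omega : z ≤ n - 1)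

/-- The filtration `V n = {c ∈ C_S(a) : χ c ≤ n}`. -/
def Vfil (hχ : IsPseudoDegree χ) (hD : CondD K χ (centralizer a) ℓ) (h1 : (1:S) ≠ 0)
    (n : ℤ) : Submodule K S where
  carrier := {c | c ∈ centralizer a ∧ χ c ≤ (n : WithBot ℤ)}
  add_mem' := fun hx hy =>
    ⟨add_mem_centralizer hx.1 hy.1, le_trans (hχ.2.2 _ _) (max_le hx.2 hy.2)⟩
  zero_mem' := ⟨zero_mem_centralizer a, by rw [chi_zero hχ]; exact bot_le⟩
  smul_mem' := fun κ x hx =>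
    ⟨smul_mem_centralizer hx.1 κ, le_trans (chi_smul_le hχ hD h1 κ x) hx.2⟩

/-- Left multiplication by `a` as a `K`-linear map. -/
def mulA : S →ₗ[K] S where
  toFun x := a * x
  map_add' x y := mul_add a x y
  map_smul' κ x := mul_smul_comm κ a x

namespace VfilAux

variable {χ a}
variable (hχ : IsPseudoDegree χ) (hD : CondD K χ (centralizer a) ℓ) (h1 : (1:S) ≠ 0)
  (ha : a ∈ nucleus S) (hm : χ a = ((m : ℤ) : WithBot ℤ)) (hmpos : 0 < m)

local notation "V" => Vfil χ a hχ hD h1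

theorem mem_Vfil {x : S} {n : ℤ} :
    x ∈ V n ↔ x ∈ centralizer a ∧ χ x ≤ (n : WithBot ℤ) := Iff.rfl

theorem Vfil_mono {n n' : ℤ} (h : n ≤ n') : V n ≤ V n' :=
  fun _ hx => ⟨hx.1, hx.2.trans (by exact_mod_cast h)⟩

include hD in
theorem Vfil_neg {n : ℤ} (hn : n < 0) : V n = ⊥ := by
  rw [eq_bot_iff]
  intro x hx
  rcases eq_or_ne x 0 with h | h
  · simp [h]
  · have h0 : 0 ≤ χ x := hD.1 _ hx.1 h
    have := le_trans h0 hx.2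
    have : (0:ℤ) ≤ n := by exact_mod_cast this
    omega

include hχ hm in
theorem mulA_inj : Function.Injective (mulA (K := K) a) := by
  intro x y h
  have h2 : a * (x - y) = 0 := by
    rw [mul_sub, sub_eq_zero]; exact h
  have h3 := hχ.2.1 a (x - y)
  rw [h2, chi_zero hχ, hm] at h3
  rcases WithBot.add_eq_bot.1 h3.symm with h4 | h4
  · exact absurd h4 WithBot.coe_ne_bot
  · have := (hχ.1 _).1 h4
    rwa [sub_eq_zero] at this

include ha hm in
theorem map_mulA_le (n : ℤ) : Submodule.map (mulA (K := K) a) (V n) ≤ V (n + m) := by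
  rintro x ⟨c, hc, rfl⟩
  refine ⟨mul_mem_centralizer ha hc.1, ?_⟩
  show χ (a * c) ≤ _
  rw [hχ.2.1, hm]
  calc ((m:ℤ) : WithBot ℤ) + χ c ≤ ((m:ℤ) : WithBot ℤ) + ((n:ℤ) : WithBot ℤ) :=
        add_le_add_right hc.2 _
    _ = ((n + m : ℤ) : WithBot ℤ) := by rw [← WithBot.coe_add]; norm_cast; ring

include ha hm hmpos in
theorem Vfil_inf (n : ℤ) :
    Submodule.map (mulA (K := K) a) (V (n - m)) ⊓ V (n - 1)
      = Submodule.map (mulA (K := K) a) (V (n - m - 1)) := by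
  apply le_antisymm
  · rintro x ⟨⟨c, hc, rfl⟩, hx2⟩
    refine ⟨c, ⟨hc.1, ?_⟩, rfl⟩
    have hchi : χ (a * c) ≤ (((n-1 : ℤ)) : WithBot ℤ) := hx2.2
    have hx : χ (a * c) = ((m:ℤ) : WithBot ℤ) + χ c := by rw [hχ.2.1, hm]
    rw [hx] at hchi
    cases hc2 : χ c with
    | bot => exact bot_le
    | coe z =>
      rw [hc2] at hchi
      have : (m:ℤ) + z ≤ n - 1 := by exact_mod_cast hchi
      exact_mod_cast (by omega : z ≤ n - m - 1)
  · rintro x ⟨c, hc, rfl⟩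
    constructor
    · exact ⟨c, ⟨hc.1, hc.2.trans (by exact_mod_cast (by omega : n - m - 1 ≤ n - m))⟩, rfl⟩
    · refine ⟨mul_mem_centralizer ha hc.1, ?_⟩
      show χ (a * c) ≤ _
      rw [hχ.2.1, hm]
      calc ((m:ℤ) : WithBot ℤ) + χ c
          ≤ ((m:ℤ) : WithBot ℤ) + ((n - m - 1 : ℤ) : WithBot ℤ) := add_le_add_right hc.2 _
        _ ≤ ((n - 1 : ℤ) : WithBot ℤ) := by
            rw [← WithBot.coe_add]
            exact_mod_cast (by omega : (m:ℤ) + (n - m - 1) ≤ n - 1)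

include hD in
theorem Vfil_step (n : ℤ) (hfd : FiniteDimensional K (V (n-1))) :
    FiniteDimensional K (V n) ∧
      Module.finrank K (V n) ≤ Module.finrank K (V (n-1)) + ℓ := by
  classical
  have hle : V (n-1) ≤ V n := Vfil_mono hχ hD h1 (by omega)
  set U := V n with hU
  set W : Submodule K U := (V (n-1)).comap U.subtype with hW
  -- every ℓ+1 classes in U ⧸ W are dependent
  have hdep : ∀ s : Finset (U ⧸ W), (LinearIndependent K fun i : s => (i : U ⧸ W)) →
      s.card ≤ ℓ := by
    intro s li
    by_contra hcard
    push_neg at hcard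
    obtain ⟨t, hts, htc⟩ := Finset.exists_subset_card_eq hcard
    let e1 : {y // y ∈ t} → {y // y ∈ s} := fun x => ⟨x.1, hts x.2⟩
    have he1 : Function.Injective e1 := fun x y hxy =>
      Subtype.ext (by simpa [e1] using congrArg Subtype.val hxy)
    have lit : LinearIndependent K fun i : {y // y ∈ t} => (i : U ⧸ W) := li.comp e1 he1
    let eq := t.equivFinOfCardEq htc
    let q : Fin (ℓ + 1) → U ⧸ W := fun i => (eq.symm i : U ⧸ W)
    have liq : LinearIndependent K q := lit.comp eq.symm eq.symm.injective
    have hq0 : ∀ i, q i ≠ 0 := fun i => liq.ne_zero i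
    choose u hu using fun i => W.mkQ_surjective (q i)
    set f : Fin (ℓ + 1) → S := fun i => ((u i : U) : S) with hf
    have hfC : ∀ i, f i ∈ centralizer a := fun i => (u i).2.1
    have hfn : ∀ i, χ (f i) = (n : WithBot ℤ) := by
      intro i
      have hne : ¬ χ (f i) ≤ ((n - 1 : ℤ) : WithBot ℤ) := by
        intro hle2
        have : u i ∈ W := by
          show ((u i : U) : S) ∈ V (n-1)
          exact ⟨hfC i, hle2⟩
        have : q i = 0 := by
          rw [← hu i, Submodule.mkQ_apply, Submodule.Quotient.mk_eq_zero]
          exact this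
        exact hq0 i this
      have hlen : χ (f i) ≤ (n : WithBot ℤ) := (u i).2.2
      cases hfi : χ (f i) with
      | bot => exact absurd (by rw [hfi]; exact bot_le) hne
      | coe z =>
        rw [hfi] at hlen hne
        have h1' : z ≤ n := by exact_mod_cast hlen
        have h2' : ¬ z ≤ n - 1 := fun hz => hne (by exact_mod_cast hz)
        have : z = n := by omega
        rw [this]
    obtain ⟨c, ⟨i0, hi0⟩, hlt⟩ := hD.2 f n hfC hfn
    have hsum : (((∑ i, c i • u i : U) : S)) = ∑ i, c i • f i := by
      rw [show ((((∑ i, c i • u i : U)) : S)) = U.subtype (∑ i, c i • u i) from rfl,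
        map_sum]
      rfl
    have hmemW : (∑ i, c i • u i) ∈ W := by
      show ((∑ i, c i • u i : U) : S) ∈ V (n-1)
      rw [hsum]
      refine ⟨?_, wb_le_pred hlt⟩
      exact sum_mem_centralizer (fun i _ => smul_mem_centralizer (hfC i) (c i))
    have hzero : ∑ i, c i • q i = 0 := by
      calc ∑ i, c i • q i = ∑ i, c i • W.mkQ (u i) := by simp only [hu]
        _ = W.mkQ (∑ i, c i • u i) := by rw [map_sum]; simp only [map_smul]
        _ = 0 := by
            rw [Submodule.mkQ_apply, Submodule.Quotient.mk_eq_zero]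
            exact hmemW
    exact hi0 (Fintype.linearIndependent_iff.1 liq c hzero i0)
  have hrank : Module.rank K (U ⧸ W) ≤ (ℓ : Cardinal) := rank_le hdep
  have hnoeQ : IsNoetherian K (U ⧸ W) :=
    IsNoetherian.iff_rank_lt_aleph0.2 (lt_of_le_of_lt hrank (Cardinal.nat_lt_aleph0 ℓ))
  have hWfd : FiniteDimensional K W := by
    have e := Submodule.comapSubtypeEquivOfLe hle
    exact e.symm.finiteDimensional
  have hUno : IsNoetherian K U :=
    (isNoetherian_iff_submodule_quotient W).2 ⟨IsNoetherian.iff_fg.2 hWfd, hnoeQ⟩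
  have hUfd : FiniteDimensional K U := IsNoetherian.iff_fg.1 hUno
  refine ⟨hUfd, ?_⟩
  haveI := hUfd
  haveI : FiniteDimensional K (U ⧸ W) := IsNoetherian.iff_fg.1 hnoeQ
  have e1 : Module.finrank K (U ⧸ W) + Module.finrank K W = Module.finrank K U :=
    Submodule.finrank_quotient_add_finrank W
  have e2 : Module.finrank K W = Module.finrank K (V (n-1)) :=
    (Submodule.comapSubtypeEquivOfLe hle).finrank_eq
  have e3 : Module.finrank K (U ⧸ W) ≤ ℓ := finrank_le_of_rank_le hrank
  omega

include hD in
theorem Vfil_findim : ∀ n : ℤ, FiniteDimensional K (V n) := by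
  have hnat : ∀ k : ℕ, FiniteDimensional K (V ((k:ℤ) - 1)) := by
    intro k
    induction k with
    | zero =>
      rw [show ((0:ℕ):ℤ) - 1 = -1 by norm_num, Vfil_neg hχ hD h1 (by norm_num)]
      infer_instance
    | succ k ih =>
      have := (Vfil_step hχ hD h1 ((k:ℤ)) ih).1
      have heq : ((k:ℤ) + 1 - 1 : ℤ) = (k:ℤ) := by ring
      rw [show (((k+1:ℕ)):ℤ) - 1 = (k:ℤ) by push_cast; ring]
      exact this
  intro n
  rcases le_or_gt 0 n with h | h
  · have := hnat (n+1).toNat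
    rwa [show (((n+1).toNat : ℤ) - 1) = n by omega] at this
  · rw [Vfil_neg hχ hD h1 h]; infer_instance

include hD in
theorem Vfil_finrank_bound : ∀ k : ℕ, Module.finrank K (V ((k:ℤ) - 1)) ≤ ℓ * k := by
  intro k
  induction k with
  | zero =>
    rw [show ((0:ℕ):ℤ) - 1 = -1 by norm_num, Vfil_neg hχ hD h1 (by norm_num)]
    simp
  | succ k ih =>
    have hfd := Vfil_findim hχ hD h1 ((k:ℤ) - 1)
    have hstep := (Vfil_step hχ hD h1 ((k:ℤ)) (by
      exact Vfil_findim hχ hD h1 _)).2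
    rw [show (((k+1:ℕ)):ℤ) - 1 = (k:ℤ) by push_cast; ring]
    calc Module.finrank K (V (k:ℤ)) ≤ Module.finrank K (V ((k:ℤ)-1)) + ℓ := hstep
      _ ≤ ℓ * k + ℓ := by omega
      _ = ℓ * (k+1) := by ring


theorem eventually_const (u : ℕ → ℕ) (hu : Monotone u) (L : ℕ) (hL : ∀ j, u j ≤ L) :
    ∃ J, ∀ j, J ≤ j → u j = u J := by
  induction L with
  | zero => exact ⟨0, fun j hj => by have := hL j; have := hL 0; omega⟩
  | succ L ih =>
    by_cases h : ∀ j, u j ≤ L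
    · exact ih h
    · push_neg at h
      obtain ⟨j0, hj0⟩ := h
      refine ⟨j0, fun j hj => ?_⟩
      have h1 := hu hj
      have h2 := hL j
      have h3 := hL j0
      omega

include ha hm in
theorem Vfil_sup_le (n : ℤ) :
    V (n-1) ⊔ Submodule.map (mulA (K := K) a) (V (n - m)) ≤ V n := by
  refine sup_le (Vfil_mono hχ hD h1 (by omega)) ?_
  have h := map_mulA_le hχ hD h1 ha hm (n - m)
  rwa [show n - (m:ℤ) + m = n by ring] at h

include ha hm hmpos in
theorem Vfil_growth (n : ℤ) :
    Module.finrank K ↥(V (n-1) ⊔ Submodule.map (mulA (K := K) a) (V (n - m)))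
      + Module.finrank K (V (n - m - 1))
    = Module.finrank K (V (n-1)) + Module.finrank K (V (n - m)) := by
  haveI := Vfil_findim hχ hD h1 (n-1)
  haveI := Vfil_findim hχ hD h1 (n - m)
  haveI := Vfil_findim hχ hD h1 (n - m - 1)
  have h := Submodule.finrank_sup_add_finrank_inf_eq (V (n-1))
    (Submodule.map (mulA (K := K) a) (V (n - m)))
  have hinf : V (n-1) ⊓ Submodule.map (mulA (K := K) a) (V (n - m))
      = Submodule.map (mulA (K := K) a) (V (n - m - 1)) := by
    rw [inf_comm]; exact Vfil_inf hχ hD h1 ha hm hmpos n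
  rw [hinf] at h
  have hrm : ∀ q : ℤ, Module.finrank K ↥(Submodule.map (mulA (K := K) a) (V q))
      = Module.finrank K (V q) := fun q =>
    ((Submodule.equivMapOfInjective _ (mulA_inj hχ hm) (V q)).symm).finrank_eq
  rw [hrm, hrm] at h
  exact h

include ha hm hmpos in
theorem Vfil_stab : ∃ N : ℕ, m + 1 ≤ N ∧ ∀ n : ℕ, N < n →
    V (n:ℤ) = V ((n:ℤ)-1) ⊔ Submodule.map (mulA (K := K) a) (V ((n:ℤ) - m)) := by
  classical
  set d : ℤ → ℕ := fun n => Module.finrank K (V n) with hd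
  have hdmono : ∀ {p q : ℤ}, p ≤ q → d p ≤ d q := by
    intro p q hpq
    haveI := Vfil_findim hχ hD h1 q
    exact Submodule.finrank_mono (Vfil_mono hχ hD h1 hpq)
  have hkey : ∀ n : ℤ, d (n-1) + d (n - m) ≤ d n + d (n - m - 1) := by
    intro n
    have hg := Vfil_growth hχ hD h1 ha hm hmpos n
    haveI := Vfil_findim hχ hD h1 n
    have hle : Module.finrank K
        ↥(V (n-1) ⊔ Submodule.map (mulA (K := K) a) (V (n - m)))
          ≤ Module.finrank K (V n) :=
      Submodule.finrank_mono (Vfil_sup_le hχ hD h1 ha hm n)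
    simp only [hd]
    omega
  have hstep : ∀ n : ℤ, d n ≤ d (n-1) + ℓ := fun n =>
    (Vfil_step hχ hD h1 n (Vfil_findim hχ hD h1 _)).2
  set u : ℕ → ℕ → ℕ := fun r j => d ((r:ℤ) + j*m) - d ((r:ℤ) + j*m - 1) with hu
  have humono : ∀ r, Monotone (u r) := by
    intro r
    apply monotone_nat_of_le_succ
    intro j
    have hk := hkey ((r:ℤ) + (j+1)*m)
    have e1 : ((r:ℤ) + (j+1)*m) - m = (r:ℤ) + j*m := by push_cast; ring
    rw [e1] at hk
    have m1 := hdmono (show (r:ℤ) + j*m - 1 ≤ (r:ℤ) + j*m by omega)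
    have m2 := hdmono (show ((r:ℤ) + (j+1)*m) - 1 ≤ ((r:ℤ) + (j+1)*m) by omega)
    simp only [hu]
    push_cast
    omega
  have hubd : ∀ r j, u r j ≤ ℓ := by
    intro r j
    have := hstep ((r:ℤ) + j*m)
    simp only [hu]
    omega
  choose J hJ using fun r => eventually_const (u r) (humono r) ℓ (hubd r)
  set Jm := (Finset.range m).sup J with hJm
  refine ⟨(Jm + 2) * m + (m + 1), Nat.le_add_left _ _, ?_⟩
  intro n hn
  set r := n % m with hr
  set j := n / m with hj
  have hrm : r < m := Nat.mod_lt _ hmpos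
  have hnd : n = m * j + r := (Nat.div_add_mod n m).symm
  have hjge : Jm + 2 ≤ j := by
    rw [hj]
    rw [Nat.le_div_iff_mul_le hmpos]
    calc (Jm + 2) * m ≤ (Jm + 2) * m + (m + 1) := Nat.le_add_right _ _
      _ ≤ n := hn.le
  have hJr : J r ≤ Jm := Finset.le_sup (Finset.mem_range.2 hrm)
  have hA : ((r:ℤ) + (j:ℤ)*(m:ℤ)) = (n:ℤ) := by rw [hnd]; push_cast; ring
  have hB : ((r:ℤ) + ((j-1 : ℕ):ℤ)*(m:ℤ)) = (n:ℤ) - m := by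
    have hcast : ((j-1 : ℕ):ℤ) = (j:ℤ) - 1 := by omega
    rw [hcast, hnd]; push_cast; ring
  have hu1 : u r j = u r (J r) := hJ r j (by omega)
  have hu2 : u r (j-1) = u r (J r) := hJ r (j-1) (by omega)
  have huj : u r j = d (n:ℤ) - d ((n:ℤ) - 1) := by simp only [hu]; rw [hA]
  have hujm : u r (j-1) = d ((n:ℤ) - m) - d ((n:ℤ) - m - 1) := by
    simp only [hu]; rw [hB]
  have m1 := hdmono (show (n:ℤ) - 1 ≤ (n:ℤ) by omega)
  have m2 := hdmono (show (n:ℤ) - m - 1 ≤ (n:ℤ) - m by omega)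
  have hkn := hkey (n:ℤ)
  have dEq : d (n:ℤ) + d ((n:ℤ) - m - 1) = d ((n:ℤ) - 1) + d ((n:ℤ) - m) := by omega
  have hgrow : Module.finrank K
      ↥(V ((n:ℤ)-1) ⊔ Submodule.map (mulA (K := K) a) (V ((n:ℤ) - m)))
        + d ((n:ℤ) - m - 1) = d ((n:ℤ)-1) + d ((n:ℤ) - m) :=
    Vfil_growth hχ hD h1 ha hm hmpos (n:ℤ)
  have hsuple := Vfil_sup_le hχ hD h1 ha hm (n:ℤ)
  haveI := Vfil_findim hχ hD h1 (n:ℤ)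
  refine (Submodule.eq_of_le_of_finrank_le hsuple ?_).symm
  show d (n:ℤ) ≤ _
  omega

include hχ hD h1 ha hm hmpos in
theorem Vfil_generation :
    ∃ (t : ℕ) (w : Fin t → S), (∀ i, w i ∈ centralizer a) ∧
      ∀ c ∈ centralizer a, ∃ φ : Fin t → Polynomial K,
        c = ∑ i, evalAt a (φ i) * w i := by
  classical
  obtain ⟨N, hN1, hN⟩ := Vfil_stab hχ hD h1 ha hm hmpos
  haveI := Vfil_findim hχ hD h1 (N:ℤ)
  set t := Module.finrank K (V (N:ℤ)) with ht
  set bW := Module.finBasis K ↥(V (N:ℤ)) with hbW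
  set w : Fin t → S := fun i => ((bW i : ↥(V (N:ℤ))) : S) with hw
  have hwmem : ∀ i, w i ∈ centralizer a := fun i => (bW i).2.1
  refine ⟨t, w, hwmem, ?_⟩
  have claim : ∀ n : ℕ, ∀ c : S, c ∈ V (n:ℤ) → ∃ φ : Fin t → Polynomial K,
      c = ∑ i, evalAt a (φ i) * w i := by
    intro n
    induction n using Nat.strong_induction_on with
    | _ n ih =>
      intro c hc
      by_cases hn : n ≤ N
      · have hcN : c ∈ V (N:ℤ) := Vfil_mono hχ hD h1 (by exact_mod_cast hn) hc
        set cU : ↥(V (N:ℤ)) := ⟨c, hcN⟩ with hcU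
        refine ⟨fun i => Polynomial.C (bW.repr cU i), ?_⟩
        have hrepr := bW.sum_repr cU
        have hco := congrArg (Submodule.subtype (V (N:ℤ))) hrepr
        rw [map_sum] at hco
        have hco2 : ∑ i, bW.repr cU i • w i = c := by
          calc ∑ i, bW.repr cU i • w i
              = ∑ x, (V (N:ℤ)).subtype (bW.repr cU x • bW x) := by
                apply Finset.sum_congr rfl
                intro i _
                rfl
            _ = (V (N:ℤ)).subtype cU := hco
            _ = c := rfl
        rw [← hco2]
        apply Finset.sum_congr rfl
        intro i _
        rw [evalAt_C, smul_mul_assoc, one_mul]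
      · push_neg at hn
        have hsup := hN n hn
        have hc2 : c ∈ V ((n:ℤ)-1) ⊔ Submodule.map (mulA (K := K) a) (V ((n:ℤ) - m)) := by
          rw [← hsup]; exact hc
        obtain ⟨y, hy, z, hz, rfl⟩ := Submodule.mem_sup.1 hc2
        obtain ⟨c2, hc2', rfl⟩ := hz
        have hcast1 : ((n:ℤ) - 1) = (((n-1 : ℕ)):ℤ) := by omega
        have hcast2 : ((n:ℤ) - m) = (((n-m : ℕ)):ℤ) := by omega
        obtain ⟨φ₁, hφ₁⟩ := ih (n-1) (by omega) y (by rw [← hcast1]; exact hy)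
        obtain ⟨φ₂, hφ₂⟩ := ih (n-m) (by omega) c2 (by rw [← hcast2]; exact hc2')
        refine ⟨fun i => φ₁ i + Polynomial.X * φ₂ i, ?_⟩
        have hterm : ∀ i, evalAt a (φ₁ i + Polynomial.X * φ₂ i) * w i
            = evalAt a (φ₁ i) * w i + a * (evalAt a (φ₂ i) * w i) := by
          intro i
          rw [evalAt_add, evalAt_mul ha, evalAt_X, add_mul, ha.1 (evalAt a (φ₂ i)) (w i)]
        calc y + (mulA (K := K) a) c2 = y + a * c2 := rfl
          _ = ∑ i, evalAt a (φ₁ i) * w i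
              + a * ∑ i, evalAt a (φ₂ i) * w i := by rw [← hφ₁, ← hφ₂]
          _ = ∑ i, evalAt a (φ₁ i) * w i
              + ∑ i, a * (evalAt a (φ₂ i) * w i) := by rw [Finset.mul_sum]
          _ = ∑ i, (evalAt a (φ₁ i) * w i + a * (evalAt a (φ₂ i) * w i)) := by
              rw [Finset.sum_add_distrib]
          _ = ∑ i, evalAt a (φ₁ i + Polynomial.X * φ₂ i) * w i := by
              apply Finset.sum_congr rfl
              intro i _
              rw [hterm i]
  intro c hc
  rcases eq_or_ne c 0 with rfl | hc0
  · exact claim 0 0 ⟨zero_mem_centralizer a, by rw [chi_zero hχ]; exact bot_le⟩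
  · obtain ⟨n, hn⟩ := chi_mem_nat hχ hD hc hc0
    exact claim n c ⟨hc, le_of_eq hn⟩

end VfilAux
end Part3

section Main
open NucAux EvalAux ChiAux VfilAux Polynomial

/-- Let `S` be a `K`-algebra with pseudo-degree function `χ`, let `a` be in the nucleus
of `S` with `m = χ a > 0`, and suppose the centralizer `C_S(a)` satisfies condition
`D(ℓ)`.  Then `C_S(a)` is a free left `K[a]`-module of rank at most `ℓ·m`: there are
`k ≤ ℓ·m` elements `b₁, …, b_k` of `C_S(a)` such that every element of `C_S(a)` is a
unique left `K[a]`-linear combination `Σ φᵢ(a)·bᵢ` with `φᵢ ∈ K[x]`. -/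
theorem centralizer_free_of_condD {K S : Type*} [Field K] [NonAssocRing S]
    [Module K S] [SMulCommClass K S S] [IsScalarTower K S S]
    (χ : S → WithBot ℤ) (hχ : IsPseudoDegree χ)
    (a : S) (ha : a ∈ nucleus S) (m : ℕ) (hm : χ a = (m : ℤ)) (hmpos : 0 < m)
    (ℓ : ℕ) (hℓ : 0 < ℓ) (hD : CondD K χ (centralizer a) ℓ) :
    ∃ (k : ℕ), k ≤ ℓ * m ∧ ∃ b : Fin k → S, (∀ i, b i ∈ centralizer a) ∧
      ∀ c ∈ centralizer a,
        ∃! φ : Fin k → Polynomial K, c = ∑ i, evalAt (a := a) (φ i) * b i := by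
  classical
  have ha0 : a ≠ 0 := by
    intro h
    rw [h, (hχ.1 0).2 rfl] at hm
    exact WithBot.bot_ne_coe hm
  have h1 : (1 : S) ≠ 0 := by
    intro h
    apply ha0
    calc a = a * 1 := (mul_one a).symm
      _ = a * 0 := by rw [h]
      _ = 0 := mul_zero a
  -- the centralizer as a K-submodule
  let Csub : Submodule K S :=
    { carrier := centralizer a
      add_mem' := fun hx hy => add_mem_centralizer hx hy
      zero_mem' := zero_mem_centralizer a
      smul_mem' := fun κ x hx => smul_mem_centralizer hx κ }
  letI smulInst : SMul (Polynomial K) ↥Csub :=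
    ⟨fun p c => ⟨evalAt a p * (c : S), evalAt_mul_mem_centralizer ha c.2 p⟩⟩
  have smul_def : ∀ (p : Polynomial K) (c : ↥Csub),
      ((p • c : ↥Csub) : S) = evalAt a p * (c : S) := fun p c => rfl
  letI modInst : Module (Polynomial K) ↥Csub :=
    { one_smul := fun c => Subtype.ext (by rw [smul_def, evalAt_one, one_mul])
      mul_smul := fun p q c => Subtype.ext (by
        rw [smul_def, smul_def, smul_def, evalAt_mul ha]
        exact ((evalAt_mem_nucleus ha q).2.1 (evalAt a p) (c : S)))
      smul_zero := fun p => Subtype.ext (by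
        rw [smul_def]
        show evalAt a p * (0 : S) = (0 : S)
        rw [mul_zero])
      smul_add := fun p c d => Subtype.ext (by
        rw [smul_def]
        show evalAt a p * ((c : S) + (d : S)) = _
        rw [mul_add]
        rfl)
      add_smul := fun p q c => Subtype.ext (by
        rw [smul_def, evalAt_add, add_mul]
        rfl)
      zero_smul := fun c => Subtype.ext (by
        rw [smul_def, evalAt_zero, zero_mul]
        rfl) }
  letI : NoZeroSMulDivisors (Polynomial K) ↥Csub := ⟨by
    intro p c h
    by_contra hboth
    push_neg at hboth
    obtain ⟨hp, hc⟩ := hboth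
    have hcoe : evalAt a p * (c : S) = 0 := congrArg Subtype.val h
    have h2 := hχ.2.1 (evalAt a p) (c : S)
    rw [hcoe, chi_zero hχ] at h2
    rcases WithBot.add_eq_bot.1 h2.symm with h3 | h3
    · exact evalAt_ne_zero hχ hD hm h1 hmpos hp ((hχ.1 _).1 h3)
    · exact hc (Subtype.ext ((hχ.1 _).1 h3))⟩
  -- generation
  obtain ⟨t, w, hwmem, hgen⟩ := Vfil_generation hχ hD h1 ha hm hmpos
  let s : Fin t → ↥Csub := fun i => ⟨w i, hwmem i⟩
  have hs : Submodule.span (Polynomial K) (Set.range s) = ⊤ := by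
    rw [Submodule.eq_top_iff']
    intro x
    obtain ⟨φ, hφ⟩ := hgen (x : S) x.2
    have hx : x = ∑ i, φ i • s i := by
      apply Subtype.ext
      rw [hφ]
      calc ∑ i, evalAt a (φ i) * w i
          = ∑ i, ((φ i • s i : ↥Csub) : S) := by
            apply Finset.sum_congr rfl
            intro i _
            rfl
        _ = ((∑ i, φ i • s i : ↥Csub) : S) := by
            rw [show ((((∑ i, φ i • s i : ↥Csub)) : S)) = Csub.subtype (∑ i, φ i • s i)
              from rfl, map_sum]
            rfl
    rw [hx]
    exact Submodule.sum_mem _ fun i _ =>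
      Submodule.smul_mem _ _ (Submodule.subset_span (Set.mem_range_self i))
  obtain ⟨k, bb⟩ := Module.basisOfFiniteTypeTorsionFree (R := Polynomial K) hs
  set b : Fin k → S := fun i => ((bb i : ↥Csub) : S) with hb
  have hbC : ∀ i, b i ∈ centralizer a := fun i => (bb i).2
  have hb0 : ∀ i, b i ≠ 0 := fun i h => bb.ne_zero i (Subtype.ext h)
  choose Bi hBi using fun i => chi_mem_nat hχ hD (hbC i) (hb0 i)
  set B := Finset.univ.sup Bi with hB
  -- counting bound
  have hbound : ∀ M : ℕ, k * (M + 1) ≤ ℓ * (B + M * m + 1) := by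
    intro M
    set F : Fin k × Fin (M+1) → S :=
      fun p => evalAt a ((Polynomial.X : Polynomial K) ^ ((p.2 : ℕ))) * b p.1 with hF
    have hXj : ∀ j : ℕ, (Polynomial.X ^ j : Polynomial K) ≠ 0 :=
      fun j => pow_ne_zero j Polynomial.X_ne_zero
    have hFmem : ∀ p, F p ∈ Vfil χ a hχ hD h1 (((B + M * m : ℕ)) : ℤ) := by
      intro p
      refine ⟨evalAt_mul_mem_centralizer ha (hbC p.1) _, ?_⟩
      show χ (evalAt a ((Polynomial.X : Polynomial K) ^ ((p.2 : ℕ))) * b p.1) ≤ _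
      rw [hχ.2.1, chi_evalAt hχ hD hm h1 hmpos (hXj _), hBi p.1,
        Polynomial.natDegree_X_pow, ← WithBot.coe_add]
      have hle1 : m * (p.2 : ℕ) ≤ m * M := Nat.mul_le_mul_left m (by omega)
      have hle2 : Bi p.1 ≤ B := Finset.le_sup (Finset.mem_univ p.1)
      have : (m * (p.2 : ℕ) + Bi p.1 : ℕ) ≤ B + M * m := by
        have : m * M = M * m := Nat.mul_comm m M
        omega
      exact_mod_cast this
    have hFli : LinearIndependent K F := by
      rw [Fintype.linearIndependent_iff]
      intro c hc
      have hsub : ∑ p : Fin k × Fin (M+1),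
          (Polynomial.C (c p) * Polynomial.X ^ ((p.2 : ℕ))) • bb p.1 = (0 : ↥Csub) := by
        apply Subtype.ext
        rw [show ((((∑ p : Fin k × Fin (M+1),
            (Polynomial.C (c p) * Polynomial.X ^ ((p.2 : ℕ))) • bb p.1 : ↥Csub)) : S))
          = Csub.subtype (∑ p : Fin k × Fin (M+1),
            (Polynomial.C (c p) * Polynomial.X ^ ((p.2 : ℕ))) • bb p.1) from rfl, map_sum]
        show ∑ p : Fin k × Fin (M+1),
            evalAt a (Polynomial.C (c p) * Polynomial.X ^ ((p.2 : ℕ))) * b p.1 = (0 : S)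
        calc ∑ p : Fin k × Fin (M+1),
            evalAt a (Polynomial.C (c p) * Polynomial.X ^ ((p.2 : ℕ))) * b p.1
            = ∑ p : Fin k × Fin (M+1), c p • F p := by
              apply Finset.sum_congr rfl
              intro p _
              rw [evalAt_mul ha, evalAt_C, smul_mul_assoc, one_mul, smul_mul_assoc]
          _ = 0 := hc
      have hre : ∑ i : Fin k,
          (∑ j : Fin (M+1), Polynomial.C (c (i, j)) * Polynomial.X ^ ((j : ℕ))) • bb i
            = (0 : ↥Csub) := by
        rw [← hsub, Fintype.sum_prod_type]
        apply Finset.sum_congr rfl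
        intro i _
        rw [Finset.sum_smul]
      have hpoly := Fintype.linearIndependent_iff.1 bb.linearIndependent _ hre
      intro p
      have h0 := hpoly p.1
      have hcoeff := congrArg (fun q : Polynomial K => q.coeff ((p.2 : ℕ))) h0
      simp only [Polynomial.finset_sum_coeff, Polynomial.coeff_C_mul,
        Polynomial.coeff_X_pow, Polynomial.coeff_zero] at hcoeff
      rw [Finset.sum_eq_single p.2] at hcoeff
      · simpa using hcoeff
      · intro j _ hj
        have : ((p.2 : ℕ)) ≠ ((j : ℕ)) := fun h => hj (Fin.ext h.symm ▸ rfl)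
        simp [if_neg (by omega : ¬ ((p.2 : ℕ)) = ((j : ℕ)))]
      · intro h
        exact absurd (Finset.mem_univ p.2) h
    haveI := Vfil_findim hχ hD h1 (((B + M * m : ℕ)) : ℤ)
    let F' : Fin k × Fin (M+1) → ↥(Vfil χ a hχ hD h1 (((B + M * m : ℕ)) : ℤ)) :=
      fun p => ⟨F p, hFmem p⟩
    have hFli' : LinearIndependent K F' := by
      apply LinearIndependent.of_comp (Vfil χ a hχ hD h1 (((B + M * m : ℕ)) : ℤ)).subtype
      exact hFli
    have hcard := hFli'.fintype_card_le_finrank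
    rw [Fintype.card_prod, Fintype.card_fin, Fintype.card_fin] at hcard
    have hfr : Module.finrank K ↥(Vfil χ a hχ hD h1 (((B + M * m : ℕ)) : ℤ))
        ≤ ℓ * (B + M * m + 1) := by
      have h2 := Vfil_finrank_bound hχ hD h1 (B + M * m + 1)
      rwa [show (((B + M * m + 1 : ℕ)) : ℤ) - 1 = (((B + M * m : ℕ)) : ℤ) by push_cast; ring]
        at h2
    exact le_trans hcard hfr
  have hkb : k ≤ ℓ * m := by
    by_contra hk
    push_neg at hk
    have h2 : (ℓ * m + 1) * (ℓ * B + ℓ + 1) ≤ k * (ℓ * B + ℓ + 1) :=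
      Nat.mul_le_mul_right _ hk
    have h3 := hbound (ℓ * B + ℓ)
    nlinarith [h2, h3]
  refine ⟨k, hkb, b, hbC, ?_⟩
  intro c hc
  set cC : ↥Csub := ⟨c, hc⟩ with hcC
  have hexists : c = ∑ i, evalAt a (bb.repr cC i) * b i := by
    have hrepr := bb.sum_repr cC
    have := congrArg (Csub.subtype) hrepr
    rw [map_sum] at this
    calc c = Csub.subtype cC := rfl
      _ = ∑ i, Csub.subtype (bb.repr cC i • bb i) := this.symm
      _ = ∑ i, evalAt a (bb.repr cC i) * b i := by
          apply Finset.sum_congr rfl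
          intro i _
          rfl
  refine ⟨fun i => bb.repr cC i, hexists, ?_⟩
  intro ψ hψ
  have hψC : ∑ i, ψ i • bb i = cC := by
    apply Subtype.ext
    rw [show ((((∑ i, ψ i • bb i : ↥Csub)) : S)) = Csub.subtype (∑ i, ψ i • bb i) from rfl,
      map_sum]
    exact (hψ.symm : (∑ i, evalAt a (ψ i) * b i) = c) ▸ rfl
  have hzero : ∑ i, (ψ i - bb.repr cC i) • bb i = (0 : ↥Csub) := by
    have hrepr := bb.sum_repr cC
    calc ∑ i, (ψ i - bb.repr cC i) • bb i
        = ∑ i, (ψ i • bb i - bb.repr cC i • bb i) := by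
          apply Finset.sum_congr rfl
          intro i _
          rw [sub_smul]
      _ = (∑ i, ψ i • bb i) - ∑ i, bb.repr cC i • bb i := Finset.sum_sub_distrib _ _
      _ = cC - cC := by rw [hψC, hrepr]
      _ = 0 := sub_self cC
  have hall := Fintype.linearIndependent_iff.1 bb.linearIndependent _ hzero
  funext i
  have := hall i
  have : ψ i = bb.repr cC i := by
    have h := hall i
    rwa [sub_eq_zero] at h
  exact this


end Main
end

section
/- Let S be a K-algebra with pseudo-degree function χ, a ∈ N(S) with χ(a) > 0, and suppose C_S(a) satisfies condition D(ℓ) for some ℓ > 0. If b ∈ C_S(a) ∩ N_l(S), then there exists a nonzero polynomial P(s,t) ∈ K[s,t] in two commuting variables such that P(a,b) = 0. -/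
/-- Evaluation of a polynomial in two commuting variables at a pair `(a, b)`;
well-defined (independent of parenthesization and order) when `a` is in the nucleus
and `b` commutes with `a`. -/
noncomputable def evalAt2 {K S : Type*} [Field K] [NonAssocRing S] [Module K S]
    (a b : S) (P : MvPolynomial (Fin 2) K) : S :=
  Finsupp.sum (AddMonoidAlgebra.coeff P) fun mon c => c • (apow a (mon 0) * apow b (mon 1))


section Helpers

set_option linter.unusedSectionVars false
set_option maxHeartbeats 1000000

variable {K S : Type*} [Field K] [NonAssocRing S] [Module K S]
  [SMulCommClass K S S] [IsScalarTower K S S]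

lemma chi_one {χ : S → WithBot ℤ} (hχ : IsPseudoDegree χ) (h1 : (1:S) ≠ 0) :
    χ (1:S) = 0 := by
  have h := hχ.2.1 1 1
  rw [one_mul] at h
  obtain ⟨m, hm⟩ := WithBot.ne_bot_iff_exists.mp (fun hc => h1 ((hχ.1 1).mp hc))
  rw [← hm] at h ⊢
  have hmm : m = m + m := by exact_mod_cast h
  have : m = 0 := by omega
  simp [this]

lemma chi_apow {χ : S → WithBot ℤ} (hχ : IsPseudoDegree χ) (h1 : χ (1:S) = 0)
    {x : S} {mx : ℤ} (hx : χ x = (mx : WithBot ℤ)) :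
    ∀ i : ℕ, χ (apow x i) = ((i * mx : ℤ) : WithBot ℤ) := by
  intro i
  induction i with
  | zero => simpa [apow] using h1
  | succ i ih =>
    show χ (x * apow x i) = _
    rw [hχ.2.1, hx, ih, ← WithBot.coe_add]
    congr 1
    push_cast
    ring

lemma sum_smul_mem_centralizer {a : S} {ι : Type*} (t : Finset ι)
    (c : ι → K) (f : ι → S) (hf : ∀ i ∈ t, f i ∈ centralizer a) :
    ∑ i ∈ t, c i • f i ∈ centralizer a := by
  simp only [centralizer, Set.mem_setOf_eq] at *
  rw [Finset.mul_sum, Finset.sum_mul]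
  refine Finset.sum_congr rfl fun i hi => ?_
  rw [mul_smul_comm, smul_mul_assoc, hf i hi]

lemma sum_fiber_smul {ι κ : Type*} [Fintype ι] [Fintype κ] [DecidableEq ι]
    (e : κ → ι) (c' : κ → K) (f : ι → S) :
    ∑ i, (∑ j, if e j = i then c' j else 0) • f i = ∑ j, c' j • f (e j) := by
  simp only [Finset.sum_smul]
  rw [Finset.sum_comm]
  refine Finset.sum_congr rfl fun j _ => ?_
  simp only [ite_smul, zero_smul]
  rw [Finset.sum_ite_eq]
  simp

lemma fiber_pick {κ ι : Type*} [Fintype κ] [DecidableEq ι] [DecidableEq κ]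
    {e : κ → ι} (he : Function.Injective e) (c' : κ → K) (j₀ : κ) :
    (∑ j, if e j = e j₀ then c' j else 0) = c' j₀ := by
  have h : ∀ j, (if e j = e j₀ then c' j else 0) = if j = j₀ then c' j else 0 := by
    intro j; by_cases h : j = j₀
    · simp [h]
    · rw [if_neg (fun hc => h (he hc)), if_neg h]
  rw [Finset.sum_congr rfl fun j _ => h j]
  simp

lemma apow_comm {a : S} (ha : a ∈ nucleus S) : ∀ i, a * apow a i = apow a i * a := by
  intro i
  induction i with
  | zero => show a * 1 = 1 * a; rw [mul_one, one_mul]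
  | succ i ih =>
    show a * (a * apow a i) = (a * apow a i) * a
    rw [ha.2.2 a (apow a i), ih]

lemma bpow_comm {a b : S} (ha : a ∈ nucleus S) (hab : a * b = b * a)
    (hbl : b ∈ leftNucleus S) : ∀ j, a * apow b j = apow b j * a := by
  intro j
  induction j with
  | zero => show a * 1 = 1 * a; rw [mul_one, one_mul]
  | succ j ih =>
    show a * (b * apow b j) = (b * apow b j) * a
    rw [ha.2.2 b (apow b j), ← ih, hbl a (apow b j), ← hab, ← ha.1 b (apow b j)]

lemma mono_mem_centralizer {a b : S} (ha : a ∈ nucleus S)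
    (hbc : ∀ j, a * apow b j = apow b j * a) (i j : ℕ) :
    apow a i * apow b j ∈ centralizer a := by
  show a * (apow a i * apow b j) = (apow a i * apow b j) * a
  rw [ha.1 (apow a i) (apow b j), ha.2.2 (apow a i) (apow b j), ← hbc j,
    ← ha.2.1 (apow a i) (apow b j), apow_comm ha i]

lemma evalAt2_zero (a b : S) : evalAt2 a b (0 : MvPolynomial (Fin 2) K) = 0 := by
  rw [evalAt2, AddMonoidAlgebra.coeff_zero]
  exact Finsupp.sum_zero_index

lemma evalAt2_add (a b : S) (P Q : MvPolynomial (Fin 2) K) :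
    evalAt2 a b (P + Q) = evalAt2 a b P + evalAt2 a b Q := by
  rw [evalAt2, evalAt2, evalAt2, AddMonoidAlgebra.coeff_add]
  exact Finsupp.sum_add_index' (fun _ => zero_smul K _) (fun _ _ _ => add_smul _ _ _)

lemma evalAt2_monomial (a b : S) (mn : Fin 2 →₀ ℕ) (c : K) :
    evalAt2 a b (MvPolynomial.monomial mn c) = c • (apow a (mn 0) * apow b (mn 1)) := by
  rw [evalAt2, ← MvPolynomial.single_eq_monomial, AddMonoidAlgebra.coeff_single]
  exact Finsupp.sum_single_index (zero_smul K _)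

lemma evalAt2_finsum (a b : S) {ι : Type*} (s : Finset ι) (g : ι → MvPolynomial (Fin 2) K) :
    evalAt2 a b (∑ k ∈ s, g k) = ∑ k ∈ s, evalAt2 a b (g k) := by
  induction s using Finset.cons_induction with
  | empty => simpa using evalAt2_zero a b
  | cons k s hk ih => rw [Finset.sum_cons, Finset.sum_cons, evalAt2_add, ih]

lemma dep_lemma {χ : S → WithBot ℤ} (hχ : IsPseudoDegree χ) {a : S} {ℓ : ℕ}
    (hD : CondD K χ (centralizer a) ℓ) (n : ℕ) :
    ∀ (ν : ℕ) (f : Fin (ℓ*(n+1)+1) → S), (∀ i, f i ∈ centralizer a) →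
      (∀ i, χ (f i) ≤ ((n:ℤ) : WithBot ℤ)) →
      (∑ i, ((χ (f i)).unbotD (-1) + 1).toNat ≤ ν) →
      ∃ c : Fin (ℓ*(n+1)+1) → K, (∃ i, c i ≠ 0) ∧ ∑ i, c i • f i = 0 := by
  intro ν
  induction ν with
  | zero =>
    intro f hfc hfn hμ
    by_cases hz : ∃ i, f i = 0
    · obtain ⟨i, hi⟩ := hz
      refine ⟨fun j => if j = i then 1 else 0, ⟨i, by simp⟩, ?_⟩
      simp [ite_smul, Finset.sum_ite_eq', hi]
    · exfalso
      push_neg at hz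
      have hterm : ∀ i, 1 ≤ ((χ (f i)).unbotD (-1) + 1).toNat := by
        intro i
        have h0 : (0 : WithBot ℤ) ≤ χ (f i) := hD.1 _ (hfc i) (hz i)
        obtain ⟨m, hm⟩ := WithBot.ne_bot_iff_exists.mp
          (fun hc => hz i ((hχ.1 (f i)).mp hc))
        have hm0 : (0:ℤ) ≤ m := by rw [← hm] at h0; exact_mod_cast h0
        rw [← hm]
        simp only [WithBot.unbotD_coe]
        omega
      have hge : (ℓ*(n+1)+1 : ℕ) ≤ ∑ i : Fin (ℓ*(n+1)+1), ((χ (f i)).unbotD (-1) + 1).toNat := by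
        calc (ℓ*(n+1)+1 : ℕ) = ∑ _i : Fin (ℓ*(n+1)+1), 1 := by simp
        _ ≤ _ := Finset.sum_le_sum fun i _ => hterm i
      omega
  | succ ν ih =>
    intro f hfc hfn hμ
    by_cases hz : ∃ i, f i = 0
    · obtain ⟨i, hi⟩ := hz
      refine ⟨fun j => if j = i then 1 else 0, ⟨i, by simp⟩, ?_⟩
      simp [ite_smul, Finset.sum_ite_eq', hi]
    push_neg at hz
    have hm : ∀ i, ∃ m : ℤ, 0 ≤ m ∧ m ≤ n ∧ χ (f i) = (m : WithBot ℤ) := by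
      intro i
      obtain ⟨m, hmeq⟩ := WithBot.ne_bot_iff_exists.mp
        (fun hc => hz i ((hχ.1 (f i)).mp hc))
      have h0 : (0 : WithBot ℤ) ≤ χ (f i) := hD.1 _ (hfc i) (hz i)
      refine ⟨m, ?_, ?_, hmeq.symm⟩
      · rw [← hmeq] at h0; exact_mod_cast h0
      · have h1 := hfn i; rw [← hmeq] at h1; exact_mod_cast h1
    choose m hm0 hmn hme using hm
    have hcard : Fintype.card (Fin (n+1)) * ℓ < Fintype.card (Fin (ℓ*(n+1)+1)) := by
      simp only [Fintype.card_fin]; ring_nf; omega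
    obtain ⟨y, hy⟩ := Fintype.exists_lt_card_fiber_of_mul_lt_card
      (fun i => (⟨(m i).toNat, by have := hmn i; have := hm0 i; omega⟩ : Fin (n+1))) hcard
    obtain ⟨T, hTsub, hTcard⟩ := Finset.exists_subset_card_eq (Nat.succ_le_of_lt hy)
    set e : Fin (ℓ+1) → Fin (ℓ*(n+1)+1) := fun j => (T.orderIsoOfFin hTcard j : Fin (ℓ*(n+1)+1)) with he_def
    have he : Function.Injective e := fun j₁ j₂ h =>
      (T.orderIsoOfFin hTcard).injective (Subtype.ext h)
    have heT : ∀ j, e j ∈ T := fun j => (T.orderIsoOfFin hTcard j).2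
    have hval : ∀ j, χ (f (e j)) = (((y:ℕ):ℤ) : WithBot ℤ) := by
      intro j
      have h1 := hTsub (heT j)
      simp only [Finset.mem_filter, Finset.mem_univ, true_and] at h1
      have h2 : (m (e j)).toNat = (y:ℕ) := congrArg Fin.val h1
      rw [hme]
      congr 1
      have := hm0 (e j)
      omega
    obtain ⟨c', ⟨j₀, hj₀⟩, hlt⟩ := hD.2 (fun j => f (e j)) ((y:ℕ):ℤ)
      (fun j => hfc _) hval
    set yv : S := ∑ j, c' j • f (e j) with hyv
    set cc : Fin (ℓ*(n+1)+1) → K := fun i => ∑ j, if e j = i then c' j else 0 with hcc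
    have hccpick : cc (e j₀) = c' j₀ := fiber_pick he c' j₀
    have key : ∑ i, cc i • f i = yv := sum_fiber_smul e c' f
    by_cases hy0 : yv = 0
    · exact ⟨cc, ⟨e j₀, by rw [hccpick]; exact hj₀⟩, by rw [key]; exact hy0⟩
    · have hyc : yv ∈ centralizer a :=
        sum_smul_mem_centralizer _ _ _ (fun j _ => hfc (e j))
      obtain ⟨m', hm'eq⟩ := WithBot.ne_bot_iff_exists.mp
        (fun hc => hy0 ((hχ.1 yv).mp hc))
      have hm'0 : (0:ℤ) ≤ m' := by
        have h0 := hD.1 _ hyc hy0; rw [← hm'eq] at h0; exact_mod_cast h0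
      have hm'y : m' < ((y:ℕ):ℤ) := by
        rw [← hm'eq] at hlt; exact_mod_cast hlt
      set i₀ := e j₀ with hi₀def
      set f' : Fin (ℓ*(n+1)+1) → S := Function.update f i₀ yv with hf'def
      have hf'apply : ∀ i, f' i = if i = i₀ then yv else f i := fun i =>
        Function.update_apply f i₀ yv i
      have hfc' : ∀ i, f' i ∈ centralizer a := by
        intro i; rw [hf'apply]; split
        · exact hyc
        · exact hfc i
      have hyn : ((y:ℕ):ℤ) ≤ (n:ℤ) := by
        have h2 := y.2; exact_mod_cast Nat.lt_succ_iff.mp h2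
      have hfn' : ∀ i, χ (f' i) ≤ ((n:ℤ) : WithBot ℤ) := by
        intro i; rw [hf'apply]; split
        · rw [← hm'eq]; exact_mod_cast le_of_lt (lt_of_lt_of_le hm'y hyn)
        · exact hfn i
      have hti₀ : χ (f i₀) = (((y:ℕ):ℤ) : WithBot ℤ) := hval j₀
      have hμ' : (∑ i, ((χ (f' i)).unbotD (-1) + 1).toNat) ≤ ν := by
        have hlt2 : (∑ i, ((χ (f' i)).unbotD (-1) + 1).toNat)
            < ∑ i, ((χ (f i)).unbotD (-1) + 1).toNat := by
          apply Finset.sum_lt_sum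
          · intro i _
            by_cases hii : i = i₀
            · subst hii
              rw [hf'apply, if_pos rfl, ← hm'eq, hti₀]
              simp only [WithBot.unbotD_coe]
              omega
            · rw [hf'apply, if_neg hii]
          · refine ⟨i₀, Finset.mem_univ _, ?_⟩
            rw [hf'apply, if_pos rfl, ← hm'eq, hti₀]
            simp only [WithBot.unbotD_coe]
            omega
        omega
      obtain ⟨d, ⟨i₁, hi₁⟩, hsum⟩ := ih f' hfc' hfn' hμ'
      refine ⟨fun i => (if i = i₀ then 0 else d i) + d i₀ * cc i, ?_, ?_⟩
      · by_cases hd : d i₀ = 0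
        · refine ⟨i₁, ?_⟩
          have hne : i₁ ≠ i₀ := fun h => hi₁ (h ▸ hd)
          simp only [if_neg hne, hd, zero_mul, add_zero]
          exact hi₁
        · refine ⟨i₀, ?_⟩
          show (if i₀ = i₀ then (0:K) else d i₀) + d i₀ * cc i₀ ≠ 0
          rw [if_pos rfl, zero_add, hccpick]
          exact mul_ne_zero hd hj₀
      · have hA : ∑ i, d i • f' i = d i₀ • yv + ∑ i ∈ Finset.univ.erase i₀, d i • f i := by
          rw [← Finset.add_sum_erase _ (fun i => d i • f' i) (Finset.mem_univ i₀)]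
          congr 1
          · rw [hf'apply, if_pos rfl]
          · exact Finset.sum_congr rfl fun i hi => by
              rw [hf'apply, if_neg (Finset.mem_erase.mp hi).1]
        have hB1 : ∑ i, (if i = i₀ then (0:K) else d i) • f i
            = ∑ i ∈ Finset.univ.erase i₀, d i • f i := by
          rw [← Finset.add_sum_erase _ (fun i => (if i = i₀ then (0:K) else d i) • f i)
            (Finset.mem_univ i₀)]
          rw [if_pos rfl, zero_smul, zero_add]
          exact Finset.sum_congr rfl fun i hi => by
            rw [if_neg (Finset.mem_erase.mp hi).1]
        have hB2 : ∑ i, (d i₀ * cc i) • f i = d i₀ • yv := by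
          simp_rw [mul_smul]
          rw [← Finset.smul_sum, key]
        calc ∑ i, ((if i = i₀ then 0 else d i) + d i₀ * cc i) • f i
            = (∑ i, (if i = i₀ then (0:K) else d i) • f i) + ∑ i, (d i₀ * cc i) • f i := by
              simp_rw [add_smul]; rw [Finset.sum_add_distrib]
        _ = (∑ i ∈ Finset.univ.erase i₀, d i • f i) + d i₀ • yv := by rw [hB1, hB2]
        _ = 0 := by rw [add_comm]; rw [hA] at hsum; exact hsum

end Helpers

/-- Let `S` be a `K`-algebra with pseudo-degree function `χ`, `a` in the nucleus with
`χ a > 0`, and suppose the centralizer `C_S(a)` satisfies condition `D(ℓ)` for some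
`ℓ > 0`.  If `b` centralizes `a` and lies in the left nucleus, then `a` and `b` are
algebraically dependent over `K`: there is a nonzero polynomial `P ∈ K[s,t]` in two
commuting variables with `P(a, b) = 0`. -/
theorem algebraically_dependent_of_commute {K S : Type*} [Field K] [NonAssocRing S]
    [Module K S] [SMulCommClass K S S] [IsScalarTower K S S]
    (χ : S → WithBot ℤ) (hχ : IsPseudoDegree χ)
    (a : S) (ha : a ∈ nucleus S) (hpos : 0 < χ a)
    (ℓ : ℕ) (hℓ : 0 < ℓ) (hD : CondD K χ (centralizer a) ℓ)
    (b : S) (hb : b ∈ centralizer a ∩ leftNucleus S) :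
    ∃ P : MvPolynomial (Fin 2) K, P ≠ 0 ∧ evalAt2 a b P = 0 := by
  classical
  have ha0 : a ≠ 0 := by
    intro h
    rw [h, (hχ.1 0).mpr rfl] at hpos
    simp at hpos
  have h1 : (1:S) ≠ 0 := by
    intro h
    apply ha0
    calc a = a * 1 := (mul_one a).symm
    _ = a * 0 := by rw [h]
    _ = 0 := mul_zero a
  have hχ1 : χ (1:S) = 0 := chi_one hχ h1
  obtain ⟨A, hA⟩ := WithBot.ne_bot_iff_exists.mp (fun hc => ha0 ((hχ.1 a).mp hc))
  have hA1 : (1:ℤ) ≤ A := by rw [← hA] at hpos; exact_mod_cast hpos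
  by_cases hb0 : b = 0
  · refine ⟨MvPolynomial.monomial (Finsupp.single 1 1) 1, ?_, ?_⟩
    · simp [MvPolynomial.monomial_eq_zero]
    · rw [evalAt2_monomial]
      have h0 : (Finsupp.single (1 : Fin 2) 1) 0 = 0 := by
        simp [Finsupp.single_apply]
      have h1' : (Finsupp.single (1 : Fin 2) 1) 1 = 1 := by simp
      rw [h0, h1']
      simp [apow, hb0]
  · obtain ⟨B, hB⟩ := WithBot.ne_bot_iff_exists.mp (fun hc => hb0 ((hχ.1 b).mp hc))
    have hB0 : (0:ℤ) ≤ B := by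
      have h := hD.1 b hb.1 hb0; rw [← hB] at h; exact_mod_cast h
    set Cn : ℕ := (A+B).toNat with hCn
    have hCnAB : (Cn : ℤ) = A + B := Int.toNat_of_nonneg (by omega)
    set M : ℕ := ℓ*(Cn+1) with hM
    set n : ℕ := M*Cn with hn
    have hNle : ℓ*(n+1)+1 ≤ (M+1)*(M+1) := by
      rw [hn, hM]
      have h1 : ℓ*(ℓ*(Cn+1)*Cn) ≤ ℓ*(ℓ*(Cn+1)*(Cn+1)) :=
        Nat.mul_le_mul le_rfl (Nat.mul_le_mul le_rfl (Nat.le_succ Cn))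
      have h2 : ℓ ≤ ℓ*(Cn+1) := Nat.le_mul_of_pos_right ℓ (by omega)
      calc ℓ*(ℓ*(Cn+1)*Cn+1)+1 = ℓ*(ℓ*(Cn+1)*Cn) + ℓ + 1 := by ring
      _ ≤ ℓ*(ℓ*(Cn+1)*(Cn+1)) + (2*(ℓ*(Cn+1))) + 1 := by omega
      _ = (ℓ*(Cn+1)+1)*(ℓ*(Cn+1)+1) := by ring
    set e : Fin (ℓ*(n+1)+1) → Fin (M+1) × Fin (M+1) :=
      fun k => finProdFinEquiv.symm (Fin.castLE hNle k) with he_def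
    have he : Function.Injective e := fun k1 k2 h =>
      Fin.castLE_injective hNle (finProdFinEquiv.symm.injective h)
    set p : Fin (ℓ*(n+1)+1) → ℕ := fun k => ((e k).1 : ℕ) with hp_def
    set q : Fin (ℓ*(n+1)+1) → ℕ := fun k => ((e k).2 : ℕ) with hq_def
    set f : Fin (ℓ*(n+1)+1) → S := fun k => apow a (p k) * apow b (q k) with hf
    have hbcomm : ∀ j, a * apow b j = apow b j * a := bpow_comm ha hb.1 hb.2
    have hfc : ∀ k, f k ∈ centralizer a := fun k => mono_mem_centralizer ha hbcomm _ _
    have hfval : ∀ k, χ (f k) = (((p k : ℤ) * A + (q k : ℤ) * B : ℤ) : WithBot ℤ) := by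
      intro k
      show χ (apow a (p k) * apow b (q k)) = _
      rw [hχ.2.1, chi_apow hχ hχ1 hA.symm (p k), chi_apow hχ hχ1 hB.symm (q k),
        ← WithBot.coe_add]
    have hfn : ∀ k, χ (f k) ≤ ((n:ℤ) : WithBot ℤ) := by
      intro k
      rw [hfval k]
      have hp : (p k : ℤ) ≤ (M:ℤ) := by
        have := Nat.lt_succ_iff.mp (e k).1.2; exact_mod_cast this
      have hq : (q k : ℤ) ≤ (M:ℤ) := by
        have := Nat.lt_succ_iff.mp (e k).2.2; exact_mod_cast this
      have hineq : (p k : ℤ) * A + (q k : ℤ) * B ≤ (n:ℤ) := by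
        have hn' : (n:ℤ) = (M:ℤ) * (Cn:ℤ) := by rw [hn]; push_cast; ring
        rw [hn', hCnAB]
        have h0p : (0:ℤ) ≤ (p k : ℤ) := Int.ofNat_nonneg _
        have h0q : (0:ℤ) ≤ (q k : ℤ) := Int.ofNat_nonneg _
        nlinarith
      exact_mod_cast hineq
    obtain ⟨c, ⟨k₀, hk₀⟩, hcsum⟩ := dep_lemma hχ hD n
      (∑ i, ((χ (f i)).unbotD (-1) + 1).toNat) f hfc hfn le_rfl
    set mon : Fin (ℓ*(n+1)+1) → (Fin 2 →₀ ℕ) :=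
      fun k => Finsupp.single 0 (p k) + Finsupp.single 1 (q k) with hmon
    have hmon0 : ∀ k, mon k 0 = p k := by
      intro k; simp [hmon, Finsupp.single_apply]
    have hmon1 : ∀ k, mon k 1 = q k := by
      intro k; simp [hmon, Finsupp.single_apply]
    have hmoninj : Function.Injective mon := by
      intro k1 k2 h
      apply he
      have h0 : p k1 = p k2 := by rw [← hmon0 k1, ← hmon0 k2, h]
      have h1' : q k1 = q k2 := by rw [← hmon1 k1, ← hmon1 k2, h]
      exact Prod.ext (Fin.ext h0) (Fin.ext h1')
    refine ⟨∑ k, MvPolynomial.monomial (mon k) (c k), ?_, ?_⟩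
    · intro hP
      have hco := congrArg (MvPolynomial.coeff (mon k₀)) hP
      rw [MvPolynomial.coeff_sum] at hco
      simp only [MvPolynomial.coeff_monomial, MvPolynomial.coeff_zero] at hco
      rw [fiber_pick hmoninj c k₀] at hco
      exact hk₀ hco
    · rw [evalAt2_finsum]
      rw [Finset.sum_congr rfl (fun k _ => evalAt2_monomial a b (mon k) (c k))]
      rw [Finset.sum_congr rfl (fun k _ => by rw [hmon0, hmon1])]
      exact hcsum
end

section
/- Let R = 𝕆[y] be the polynomial ring over the octonions, σ an ℝ-algebra endomorphism of R with deg_y(σ(y)) > 1, δ a σ-derivation, and S = R[x; σ, δ] the non-associative Ore extension. If a ∈ S has positive degree in x and all its coefficients lie in ℝ[y], then a belongs to the nucleus N(S). -/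
/-- The octonions, realized via the Cayley–Dickson doubling of the real quaternions. -/
def Octonion : Type := Quaternion ℝ × Quaternion ℝ

noncomputable instance : AddCommGroup Octonion :=
  inferInstanceAs (AddCommGroup (Quaternion ℝ × Quaternion ℝ))

noncomputable instance : Module ℝ Octonion :=
  inferInstanceAs (Module ℝ (Quaternion ℝ × Quaternion ℝ))

/-- Cayley–Dickson multiplication on pairs of quaternions. -/
noncomputable def Octonion.omul (a b : Quaternion ℝ × Quaternion ℝ) :
    Quaternion ℝ × Quaternion ℝ :=
  (a.1 * b.1 - star b.2 * a.2, b.2 * a.1 + a.2 * star b.1)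

noncomputable instance : One Octonion := ⟨((1 : Quaternion ℝ), (0 : Quaternion ℝ))⟩

theorem Octonion.omul_add (a b c : Quaternion ℝ × Quaternion ℝ) :
    Octonion.omul a (b + c) = Octonion.omul a b + Octonion.omul a c := by
  unfold Octonion.omul
  refine Prod.ext ?_ ?_ <;>
    simp only [Prod.fst_add, Prod.snd_add, mul_add, add_mul, star_add] <;> abel

theorem Octonion.add_omul (a b c : Quaternion ℝ × Quaternion ℝ) :
    Octonion.omul (a + b) c = Octonion.omul a c + Octonion.omul b c := by
  unfold Octonion.omul
  refine Prod.ext ?_ ?_ <;>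
    simp only [Prod.fst_add, Prod.snd_add, mul_add, add_mul, star_add] <;> abel

theorem Octonion.zero_omul (a : Quaternion ℝ × Quaternion ℝ) :
    Octonion.omul 0 a = 0 := by
  unfold Octonion.omul; refine Prod.ext ?_ ?_ <;> simp

theorem Octonion.omul_zero (a : Quaternion ℝ × Quaternion ℝ) :
    Octonion.omul a 0 = 0 := by
  unfold Octonion.omul; refine Prod.ext ?_ ?_ <;> simp

noncomputable instance : NonUnitalNonAssocRing Octonion :=
  { (inferInstanceAs (AddCommGroup Octonion) : AddCommGroup Octonion) with
    mul := Octonion.omul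
    left_distrib := fun a b c => Octonion.omul_add a b c
    right_distrib := fun a b c => Octonion.add_omul a b c
    zero_mul := fun a => Octonion.zero_omul a
    mul_zero := fun a => Octonion.omul_zero a }

/-- `R = 𝕆[y]`, the polynomial ring over the octonions, as finitely supported
sequences of octonion coefficients. -/
noncomputable abbrev OctPoly : Type := ℕ →₀ Octonion

/-- The convolution product on `𝕆[y]`. -/
noncomputable instance : Mul OctPoly :=
  ⟨fun p q => p.sum fun i a => q.sum fun j b => Finsupp.single (i + j) (a * b)⟩

theorem OctPoly.mul_zero (a : OctPoly) : a * (0 : OctPoly) = 0 := by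
  show (Finsupp.sum a fun i c => Finsupp.sum 0 fun j b => Finsupp.single (i + j) (c * b)) = 0
  simp

/-- The variable `y` of `𝕆[y]`. -/
noncomputable def Yv : OctPoly := Finsupp.single 1 (1 : Octonion)

/-- The constant polynomial `1` of `𝕆[y]`. -/
noncomputable def oneR : OctPoly := Finsupp.single 0 (1 : Octonion)

/-- The `y`-degree of a polynomial in `𝕆[y]` (with junk value `0` at `0`). -/
def degy (r : OctPoly) : ℕ := WithBot.unbotD 0 (r.support.max)

/-- The underlying additive group of the Ore extension `S = R[x; σ, δ]`:
finitely supported sequences of coefficients in `R = 𝕆[y]`. -/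
noncomputable abbrev OrePoly : Type := ℕ →₀ OctPoly

/-- Left multiplication by `x` in `R[x; σ, δ]`, determined by
`x·(r xʲ) = σ(r) x^(j+1) + δ(r) xʲ`. -/
noncomputable def xmul (σ δ : OctPoly →+ OctPoly) : OrePoly →+ OrePoly :=
  Finsupp.liftAddHom fun j =>
    (Finsupp.singleAddHom (j + 1)).comp σ + (Finsupp.singleAddHom j).comp δ

/-- The multiplication of the non-associative Ore extension `R[x; σ, δ]`:
`(Σᵢ aᵢ xⁱ)·q = Σᵢ aᵢ·(xⁱ·q)`, where `xⁱ` acts via iterated `xmul` and `aᵢ`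
multiplies every coefficient from the left. -/
noncomputable def oreMul (σ δ : OctPoly →+ OctPoly) (p q : OrePoly) : OrePoly :=
  p.sum fun i a => Finsupp.mapRange (a * ·) (OctPoly.mul_zero a) ((xmul σ δ)^[i] q)

/-- The constant `1 = 1·x⁰` of the Ore extension. -/
noncomputable def oneS : OrePoly := Finsupp.single 0 oneR

/-- The `x`-degree of an element of the Ore extension, valued in `ℤ ∪ {-∞}`. -/
def xdeg (p : OrePoly) : WithBot ℤ := (p.support.max).map (Nat.cast : ℕ → ℤ)

/-- `σ` is a unital `ℝ`-algebra endomorphism of `𝕆[y]`. -/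
def IsAlgEndo (σ : OctPoly →+ OctPoly) : Prop :=
  (∀ p q : OctPoly, σ (p * q) = σ p * σ q) ∧ σ oneR = oneR ∧
    (∀ (r : ℝ) (p : OctPoly), σ (r • p) = r • σ p)

/-- `δ` is a `σ`-derivation of `𝕆[y]`. -/
def IsSigmaDerivation (σ δ : OctPoly →+ OctPoly) : Prop :=
  (∀ p q : OctPoly, δ (p * q) = σ p * δ q + δ p * q) ∧
    (∀ (r : ℝ) (p : OctPoly), δ (r • p) = r • δ p)

/-- An element of `𝕆` is real if it is a real multiple of `1`. -/
def Octonion.IsReal (c : Octonion) : Prop := ∃ r : ℝ, c = r • (1 : Octonion)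

/-- Membership in the nucleus of the Ore extension `R[x; σ, δ]`. -/
def OreNucleus (σ δ : OctPoly →+ OctPoly) (a : OrePoly) : Prop :=
  (∀ b c : OrePoly, oreMul σ δ a (oreMul σ δ b c) = oreMul σ δ (oreMul σ δ a b) c) ∧
  (∀ b c : OrePoly, oreMul σ δ (oreMul σ δ b a) c = oreMul σ δ b (oreMul σ δ a c)) ∧
  (∀ b c : OrePoly, oreMul σ δ (oreMul σ δ b c) a = oreMul σ δ b (oreMul σ δ c a))

/-! ### Octonion basics -/

namespace Octonion
open scoped Quaternion

theorem mul_def (a b : Octonion) : a * b = Octonion.omul a b := rfl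

@[simp] theorem smul_fst (r : ℝ) (a : Octonion) : (r • a).1 = r • a.1 := rfl
@[simp] theorem smul_snd (r : ℝ) (a : Octonion) : (r • a).2 = r • a.2 := rfl
@[simp] theorem add_fst (a b : Octonion) : (a + b).1 = a.1 + b.1 := rfl
@[simp] theorem add_snd (a b : Octonion) : (a + b).2 = a.2 + b.2 := rfl
@[simp] theorem sub_fst (a b : Octonion) : (a - b).1 = a.1 - b.1 := rfl
@[simp] theorem sub_snd (a b : Octonion) : (a - b).2 = a.2 - b.2 := rfl
@[simp] theorem zero_fst : (0 : Octonion).1 = 0 := rfl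
@[simp] theorem zero_snd : (0 : Octonion).2 = 0 := rfl

/-- conjugation -/
noncomputable def conj (a : Octonion) : Octonion := (star a.1, -a.2)

@[simp] theorem one_fst : (1 : Octonion).1 = 1 := rfl
@[simp] theorem one_snd : (1 : Octonion).2 = 0 := rfl

theorem fst_mul (a b : Octonion) : (a * b).1 = a.1 * b.1 - star b.2 * a.2 := rfl
theorem snd_mul (a b : Octonion) : (a * b).2 = b.2 * a.1 + a.2 * star b.1 := rfl

theorem smul_mul (r : ℝ) (a b : Octonion) : (r • a) * b = r • (a * b) := by
  refine Prod.ext ?_ ?_ <;>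
    simp [fst_mul, snd_mul, Prod.smul_fst, Prod.smul_snd, smul_sub, smul_add,
      mul_smul_comm, smul_mul_assoc]

theorem mul_smul' (r : ℝ) (a b : Octonion) : a * (r • b) = r • (a * b) := by
  refine Prod.ext ?_ ?_ <;>
    simp [fst_mul, snd_mul, Prod.smul_fst, Prod.smul_snd, smul_sub, smul_add,
      mul_smul_comm, smul_mul_assoc, star_smul]

theorem one_mul' (a : Octonion) : (1 : Octonion) * a = a := by
  refine Prod.ext ?_ ?_ <;> simp [fst_mul, snd_mul]

theorem mul_one' (a : Octonion) : a * (1 : Octonion) = a := by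
  refine Prod.ext ?_ ?_ <;> simp [fst_mul, snd_mul]

theorem isReal_zero : (0 : Octonion).IsReal := ⟨0, by simp⟩

theorem isReal_add {a b : Octonion} (ha : a.IsReal) (hb : b.IsReal) : (a + b).IsReal := by
  obtain ⟨r, rfl⟩ := ha; obtain ⟨s, rfl⟩ := hb; exact ⟨r + s, by rw [add_smul]⟩

theorem isReal_smul {a : Octonion} (r : ℝ) (ha : a.IsReal) : (r • a).IsReal := by
  obtain ⟨s, rfl⟩ := ha; exact ⟨r * s, by rw [mul_smul]⟩

theorem isReal_mul {a b : Octonion} (ha : a.IsReal) (hb : b.IsReal) : (a * b).IsReal := by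
  obtain ⟨r, rfl⟩ := ha; obtain ⟨s, rfl⟩ := hb
  exact ⟨r * s, by rw [smul_mul, mul_smul', one_mul', mul_smul]⟩

theorem real_mul {a g : Octonion} (hg : g.IsReal) : g * a = a * g := by
  obtain ⟨r, rfl⟩ := hg; rw [smul_mul, mul_smul', one_mul', mul_one']

theorem real_left_assoc {g : Octonion} (hg : g.IsReal) (a b : Octonion) :
    g * (a * b) = (g * a) * b := by
  obtain ⟨r, rfl⟩ := hg
  rw [smul_mul, smul_mul, smul_mul, one_mul', one_mul']

theorem real_mid_assoc {g : Octonion} (hg : g.IsReal) (a b : Octonion) :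
    (a * g) * b = a * (g * b) := by
  obtain ⟨r, rfl⟩ := hg
  rw [mul_smul', smul_mul, smul_mul, mul_smul', one_mul', mul_one']

theorem real_right_assoc {g : Octonion} (hg : g.IsReal) (a b : Octonion) :
    (a * b) * g = a * (b * g) := by
  obtain ⟨r, rfl⟩ := hg
  rw [mul_smul', mul_smul', mul_smul', mul_one', mul_one']

/-- the quadratic relation `a² = 2 Re(a) a - N(a)`. -/
theorem sq_eq (a : Octonion) :
    a * a = (2 * a.1.re) • a - (Quaternion.normSq a.1 + Quaternion.normSq a.2) • 1 := by
  refine Prod.ext ?_ ?_ <;>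
    simp [fst_mul, snd_mul] <;>
    ext <;>
    simp [Quaternion.re_mul, Quaternion.imI_mul, Quaternion.imJ_mul, Quaternion.imK_mul,
      Quaternion.normSq_def'] <;> ring

/-- `a ⋆ star a = N(a)`. -/
theorem mul_conj (a : Octonion) :
    a * a.conj =
      (Quaternion.normSq a.1 + Quaternion.normSq a.2) • 1 := by
  refine Prod.ext ?_ ?_ <;>
    simp only [fst_mul, snd_mul] <;> simp [conj] <;>
    ext <;>
    simp [Quaternion.re_mul, Quaternion.imI_mul, Quaternion.imJ_mul, Quaternion.imK_mul,
      Quaternion.normSq_def'] <;> ring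

theorem eq_zero_of_sq_zero {a : Octonion} (h : a * a = 0) : a = 0 := by
  have h1 : a.1 * a.1 - star a.2 * a.2 = 0 := congrArg Prod.fst h
  have h2 : a.2 * a.1 + a.2 * star a.1 = 0 := congrArg Prod.snd h
  have h2' : a.2 * (a.1 + star a.1) = 0 := by rw [mul_add]; exact h2
  rcases mul_eq_zero.mp h2' with h3 | h3
  · -- a.2 = 0
    have : a.1 * a.1 = 0 := by simpa [h3] using h1
    have : a.1 = 0 := by
      rcases mul_eq_zero.mp this with h | h <;> exact h
    exact Prod.ext this h3
  · -- a.1 + star a.1 = 0, i.e. re a.1 = 0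
    have hre : a.1.re = 0 := by
      have := congrArg QuaternionAlgebra.re h3
      have h4 := congrArg QuaternionAlgebra.re h3
      simp at h4
      linarith
    have hsq : (a.1 * a.1).re = -Quaternion.normSq a.1 := by
      simp [Quaternion.re_mul, Quaternion.normSq_def', hre]; ring
    have h1re : (a.1 * a.1).re = (star a.2 * a.2).re := by
      have := congrArg QuaternionAlgebra.re h1
      simpa [sub_eq_zero] using this
    have hs2 : (star a.2 * a.2).re = Quaternion.normSq a.2 := by
      rw [Quaternion.star_mul_self]; simp
    have : Quaternion.normSq a.1 = 0 ∧ Quaternion.normSq a.2 = 0 := by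
      constructor <;>
        nlinarith [Quaternion.normSq_nonneg (a := a.1), Quaternion.normSq_nonneg (a := a.2),
          hsq, h1re, hs2]
    exact Prod.ext (Quaternion.normSq_eq_zero.mp this.1) (Quaternion.normSq_eq_zero.mp this.2)

end Octonion
namespace Octonion
open scoped Quaternion

theorem one_ne_zero' : (1 : Octonion) ≠ 0 := by
  intro h
  have := congrArg (fun a : Octonion => a.1.re) h
  simp at this

/-- an octonion from a pair of quaternions -/
noncomputable def ofPair (x y : Quaternion ℝ) : Octonion := (x, y)
@[simp] theorem ofPair_fst (x y : Quaternion ℝ) : (ofPair x y).1 = x := rfl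
@[simp] theorem ofPair_snd (x y : Quaternion ℝ) : (ofPair x y).2 = y := rfl
/-- a quaternion from its four components -/
def qmk (a b c d : ℝ) : Quaternion ℝ := ⟨a, b, c, d⟩
@[simp] theorem qmk_re (a b c d : ℝ) : (qmk a b c d).re = a := rfl
@[simp] theorem qmk_imI (a b c d : ℝ) : (qmk a b c d).imI = b := rfl
@[simp] theorem qmk_imJ (a b c d : ℝ) : (qmk a b c d).imJ = c := rfl
@[simp] theorem qmk_imK (a b c d : ℝ) : (qmk a b c d).imK = d := rfl

theorem real_of_comm {c : Octonion} (h : ∀ u : Octonion, c * u = u * c) : c.IsReal := by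
  have h1 := h (ofPair 0 1)
  have h2 := h (ofPair 0 (qmk 0 1 0 0))
  replace h1 := Prod.ext_iff.mp h1; replace h2 := Prod.ext_iff.mp h2
  simp only [fst_mul, snd_mul, Quaternion.ext_iff, Quaternion.re_mul, Quaternion.imI_mul,
    Quaternion.imJ_mul, Quaternion.imK_mul, Quaternion.re_star, Quaternion.imI_star,
    Quaternion.imJ_star, Quaternion.imK_star, ofPair_fst, ofPair_snd, qmk_re, qmk_imI, qmk_imJ, qmk_imK] at h1 h2
  simp at h1 h2
  obtain ⟨⟨e1, e2, e3⟩, e4, e5, e6⟩ := h1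
  obtain ⟨⟨e7, -, -⟩, -⟩ := h2
  refine ⟨c.1.re, ?_⟩
  refine Prod.ext ?_ ?_ <;> ext <;> simp <;> first
    | rfl
    | linarith

set_option maxHeartbeats 1600000 in
theorem real_of_mid {c : Octonion}
    (h : ∀ u v : Octonion, (u * c) * v = u * (c * v)) : c.IsReal := by
  have h1 := h (ofPair (qmk 0 1 0 0) 0) (ofPair 0 1)
  have h2 := h (ofPair (qmk 0 0 1 0) 0) (ofPair 0 1)
  have h3 := h (ofPair (qmk 0 0 0 1) 0) (ofPair 0 1)
  have h4 := h (ofPair (qmk 0 1 0 0) 0) (ofPair (qmk 0 0 1 0) 0)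
  replace h1 := Prod.ext_iff.mp h1; replace h2 := Prod.ext_iff.mp h2
  replace h3 := Prod.ext_iff.mp h3; replace h4 := Prod.ext_iff.mp h4
  simp only [fst_mul, snd_mul, Quaternion.ext_iff, Quaternion.re_mul, Quaternion.imI_mul,
    Quaternion.imJ_mul, Quaternion.imK_mul, Quaternion.re_star, Quaternion.imI_star,
    Quaternion.imJ_star, Quaternion.imK_star, ofPair_fst, ofPair_snd, qmk_re, qmk_imI, qmk_imJ, qmk_imK] at h1 h2 h3 h4
  simp at h1 h2 h3 h4
  obtain ⟨⟨e1, e2⟩, e3, e4⟩ := h1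
  obtain ⟨⟨-, -⟩, -, e5⟩ := h2
  obtain ⟨⟨-, e6⟩, -, -⟩ := h3
  obtain ⟨-, -, -, e7⟩ := h4
  refine ⟨c.1.re, ?_⟩
  refine Prod.ext ?_ ?_ <;> ext <;> simp <;> first
    | rfl
    | linarith

end Octonion
/-! ### OctPoly basics -/

namespace OctPoly

theorem mul_def (p q : OctPoly) :
    p * q = p.sum fun i a => q.sum fun j b => Finsupp.single (i + j) (a * b) := rfl

theorem zero_mul' (q : OctPoly) : (0 : OctPoly) * q = 0 := by
  rw [mul_def]; exact Finsupp.sum_zero_index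

theorem single_mul_single (i j : ℕ) (a b : Octonion) :
    (Finsupp.single i a : OctPoly) * Finsupp.single j b = Finsupp.single (i + j) (a * b) := by
  rw [mul_def, Finsupp.sum_single_index (by simp),
    Finsupp.sum_single_index (by rw [MulZeroClass.mul_zero, Finsupp.single_zero])]

theorem mul_add' (p q r : OctPoly) : p * (q + r) = p * q + p * r := by
  rw [mul_def, mul_def, mul_def, ← Finsupp.sum_add]
  congr 1; funext i a
  exact Finsupp.sum_add_index' (fun j => by rw [MulZeroClass.mul_zero, Finsupp.single_zero])
    (fun j b₁ b₂ => by rw [mul_add, Finsupp.single_add])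

theorem add_mul' (p q r : OctPoly) : (p + q) * r = p * r + q * r := by
  rw [mul_def, mul_def, mul_def]
  refine Finsupp.sum_add_index' (fun i => ?_) (fun i a₁ a₂ => ?_)
  · simp
  · rw [← Finsupp.sum_add]
    congr 1; funext j b
    rw [add_mul, Finsupp.single_add]

/-- additive induction principle -/
theorem addInduction {P : OctPoly → Prop} (h0 : P 0)
    (hsingle : ∀ (k : ℕ) (c : Octonion), P (Finsupp.single k c))
    (hadd : ∀ p q, P p → P q → P (p + q)) : ∀ p, P p := fun p =>
  Finsupp.induction p h0 fun a b f _ _ hf => hadd _ _ (hsingle a b) hf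

/-- `ℝ[y]` membership. -/
def RealP (p : OctPoly) : Prop := ∀ k, (p k).IsReal

theorem realP_zero : RealP 0 := fun _ => Octonion.isReal_zero

theorem realP_add {p q : OctPoly} (hp : RealP p) (hq : RealP q) : RealP (p + q) := fun k => by
  rw [Finsupp.add_apply]; exact Octonion.isReal_add (hp k) (hq k)

theorem realP_single {k : ℕ} {c : Octonion} (hc : c.IsReal) : RealP (Finsupp.single k c) :=
  fun m => by
    rw [Finsupp.single_apply]
    split
    · exact hc
    · exact Octonion.isReal_zero

theorem realP_split {a : ℕ} {b : Octonion} {f : OctPoly} (ha : a ∉ f.support)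
    (h : RealP (Finsupp.single a b + f)) : b.IsReal ∧ RealP f := by
  have hfa : f a = 0 := Finsupp.notMem_support_iff.mp ha
  constructor
  · have := h a
    rwa [Finsupp.add_apply, Finsupp.single_eq_same, hfa, add_zero] at this
  · intro k
    by_cases hk : k = a
    · rw [hk, hfa]; exact Octonion.isReal_zero
    · have := h k
      rwa [Finsupp.add_apply, Finsupp.single_eq_of_ne hk, zero_add] at this

/-- induction principle for real polynomials -/
theorem realP_induction {P : OctPoly → Prop} (h0 : P 0)
    (hsingle : ∀ (k : ℕ) (c : Octonion), c.IsReal → P (Finsupp.single k c))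
    (hadd : ∀ p q, RealP p → RealP q → P p → P q → P (p + q)) :
    ∀ p, RealP p → P p := by
  intro p
  induction p using Finsupp.induction with
  | zero => exact fun _ => h0
  | single_add a b f ha hb ih =>
    intro hreal
    obtain ⟨hb', hf⟩ := realP_split ha hreal
    exact hadd _ _ (realP_single hb') hf (hsingle a b hb') (ih hf)

theorem realP_mul {p q : OctPoly} (hp : RealP p) (hq : RealP q) : RealP (p * q) := by
  refine realP_induction (P := fun p => RealP (p * q)) ?_ ?_ ?_ p hp
  · show RealP ((0 : OctPoly) * q)
    rw [zero_mul']; exact realP_zero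
  · intro k c hc
    refine realP_induction (P := fun q => RealP (Finsupp.single k c * q)) ?_ ?_ ?_ q hq
    · show RealP ((Finsupp.single k c : OctPoly) * 0)
      rw [OctPoly.mul_zero]; exact realP_zero
    · intro m d hd; rw [single_mul_single]; exact realP_single (Octonion.isReal_mul hc hd)
    · intro q1 q2 _ _ ih1 ih2
      show RealP ((Finsupp.single k c : OctPoly) * (q1 + q2))
      rw [mul_add']; exact realP_add ih1 ih2
  · intro p1 p2 _ _ ih1 ih2
    show RealP ((p1 + p2) * q)
    rw [add_mul']; exact realP_add ih1 ih2

theorem real_left_assoc {f : OctPoly} (hf : RealP f) (p q : OctPoly) :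
    f * (p * q) = (f * p) * q := by
  refine realP_induction (P := fun f => ∀ p q, f * (p * q) = (f * p) * q) ?_ ?_ ?_ f hf p q
  · intro p q; rw [zero_mul', zero_mul', zero_mul']
  · intro k c hc p q
    induction q using addInduction with
    | h0 => simp only [OctPoly.mul_zero]
    | hsingle m d =>
      induction p using addInduction with
      | h0 => simp only [zero_mul', OctPoly.mul_zero]
      | hsingle n a =>
        simp only [single_mul_single, Octonion.real_left_assoc hc, add_assoc]
      | hadd p1 p2 ih1 ih2 => simp only [add_mul', mul_add', ih1, ih2]
    | hadd q1 q2 ih1 ih2 => simp only [mul_add', ih1, ih2]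
  · intro f1 f2 _ _ ih1 ih2 p q; simp only [add_mul', ih1, ih2]

theorem real_mid_assoc {g : OctPoly} (hg : RealP g) (p q : OctPoly) :
    (p * g) * q = p * (g * q) := by
  refine realP_induction (P := fun g => ∀ p q, (p * g) * q = p * (g * q)) ?_ ?_ ?_ g hg p q
  · intro p q; simp only [OctPoly.mul_zero, zero_mul']
  · intro k c hc p q
    induction q using addInduction with
    | h0 => simp only [OctPoly.mul_zero]
    | hsingle m d =>
      induction p using addInduction with
      | h0 => simp only [zero_mul']
      | hsingle n a =>
        simp only [single_mul_single, Octonion.real_mid_assoc hc, add_assoc]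
      | hadd p1 p2 ih1 ih2 => simp only [add_mul', ih1, ih2]
    | hadd q1 q2 ih1 ih2 => simp only [mul_add', ih1, ih2]
  · intro g1 g2 _ _ ih1 ih2 p q; simp only [mul_add', add_mul', ih1, ih2]

theorem real_right_assoc {g : OctPoly} (hg : RealP g) (p q : OctPoly) :
    (p * q) * g = p * (q * g) := by
  refine realP_induction (P := fun g => ∀ p q, (p * q) * g = p * (q * g)) ?_ ?_ ?_ g hg p q
  · intro p q; simp only [OctPoly.mul_zero]
  · intro k c hc p q
    induction q using addInduction with
    | h0 => simp only [OctPoly.mul_zero, zero_mul']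
    | hsingle m d =>
      induction p using addInduction with
      | h0 => simp only [zero_mul']
      | hsingle n a =>
        simp only [single_mul_single, Octonion.real_right_assoc hc, add_assoc]
      | hadd p1 p2 ih1 ih2 => simp only [add_mul', ih1, ih2]
    | hadd q1 q2 ih1 ih2 => simp only [mul_add', add_mul', ih1, ih2]
  · intro g1 g2 _ _ ih1 ih2 p q; simp only [mul_add', ih1, ih2]

theorem mul_single_zero_apply (p : OctPoly) (u : Octonion) (k : ℕ) :
    (p * (Finsupp.single 0 u : OctPoly)) k = p k * u := by
  classical
  rw [mul_def, Finsupp.sum_apply,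
    Finsupp.sum_congr (g2 := fun i a => if i = k then a * u else 0) (fun i _ => by
      rw [Finsupp.sum_single_index (by rw [MulZeroClass.mul_zero, Finsupp.single_zero]), add_zero,
        Finsupp.single_apply]),
    Finsupp.sum_ite_eq']
  split
  · rfl
  · rw [Finsupp.notMem_support_iff.mp ‹_›, MulZeroClass.zero_mul]

theorem single_zero_mul_apply (p : OctPoly) (u : Octonion) (k : ℕ) :
    ((Finsupp.single 0 u : OctPoly) * p) k = u * p k := by
  classical
  rw [mul_def, Finsupp.sum_single_index (by simp), Finsupp.sum_apply,
    Finsupp.sum_congr (g2 := fun j b => if j = k then u * b else 0) (fun j _ => by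
      rw [zero_add, Finsupp.single_apply]),
    Finsupp.sum_ite_eq']
  split
  · rfl
  · rw [Finsupp.notMem_support_iff.mp ‹_›, MulZeroClass.mul_zero]

theorem mul_apply' (p q : OctPoly) (n : ℕ) :
    (p * q) n = p.sum fun i a => q.sum fun j b => if i + j = n then a * b else 0 := by
  classical
  rw [mul_def, Finsupp.sum_apply]
  refine Finsupp.sum_congr fun i _ => ?_
  rw [Finsupp.sum_apply]
  exact Finsupp.sum_congr fun j _ => Finsupp.single_apply

theorem oneR_mul (p : OctPoly) : oneR * p = p := by
  rw [oneR, mul_def, Finsupp.sum_single_index]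
  · simp only [zero_add, Octonion.one_mul']
    exact Finsupp.sum_single p
  · simp

theorem mul_oneR (p : OctPoly) : p * oneR = p := by
  rw [oneR, mul_def,
    Finsupp.sum_congr (g2 := fun i a => Finsupp.single i a) (fun i _ => by
      rw [Finsupp.sum_single_index (by rw [MulZeroClass.mul_zero, Finsupp.single_zero]), add_zero,
        Octonion.mul_one'])]
  exact Finsupp.sum_single p

theorem Yv_mul_single (k : ℕ) (c : Octonion) :
    Yv * Finsupp.single k c = Finsupp.single (k + 1) c := by
  rw [Yv, single_mul_single, Octonion.one_mul', add_comm]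

theorem isReal_one : (1 : Octonion).IsReal := ⟨1, (one_smul _ _).symm⟩

theorem realP_Yv : RealP Yv := realP_single isReal_one
theorem realP_oneR : RealP oneR := realP_single isReal_one

/-- powers of `y` -/
noncomputable def ypow : ℕ → OctPoly
  | 0 => oneR
  | k+1 => Yv * ypow k

theorem ypow_eq (k : ℕ) : ypow k = Finsupp.single k 1 := by
  induction k with
  | zero => rfl
  | succ k ih => rw [ypow, ih, Yv_mul_single]

theorem realP_smul {p : OctPoly} (r : ℝ) (hp : RealP p) : RealP (r • p) := fun k => by
  rw [Finsupp.smul_apply]; exact Octonion.isReal_smul r (hp k)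

theorem realP_ypow (k : ℕ) : RealP (ypow k) := by
  rw [ypow_eq]; exact realP_single isReal_one

theorem single_real_eq (k : ℕ) (r : ℝ) :
    (Finsupp.single k (r • (1 : Octonion)) : OctPoly) = r • ypow k := by
  rw [ypow_eq, Finsupp.smul_single]

end OctPoly
/-! ### structure of σ and δ -/

noncomputable instance : FiniteDimensional ℝ Octonion :=
  inferInstanceAs (FiniteDimensional ℝ (Quaternion ℝ × Quaternion ℝ))

namespace OrePf

open OctPoly

variable {σ δ : OctPoly →+ OctPoly}

/-- a polynomial satisfying a real quadratic relation is constant -/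
theorem const_of_quadratic {p : OctPoly} {t n : ℝ}
    (h : p * p = t • p - n • oneR) : p = Finsupp.single 0 (p 0) := by
  classical
  by_cases hs : p.support.Nonempty
  · set m := p.support.max' hs with hm
    have hle : ∀ i ∈ p.support, i ≤ m := fun i hi => Finset.le_max' _ i hi
    have hmem : m ∈ p.support := p.support.max'_mem hs
    by_cases hm0 : m = 0
    · ext a
      rcases Nat.eq_zero_or_pos a with rfl | ha
      · rw [Finsupp.single_eq_same]
      · rw [Finsupp.single_eq_of_ne (by omega)]
        refine Finsupp.notMem_support_iff.mp fun hc => ?_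
        have := hle a hc; omega
    · exfalso
      have key : (p * p) (m + m) = p m * p m := by
        rw [mul_apply']
        have step1 : ∀ i ∈ p.support,
            (p.sum fun j b => if i + j = m + m then p i * b else 0) =
              (if i = m then p m * p m else 0) := by
          intro i hi
          by_cases him : i = m
          · subst him
            rw [if_pos rfl]
            have h2 : (p.sum fun j b => if m + j = m + m then p m * b else 0) =
                p.sum fun j b => if j = m then p m * b else 0 :=
              Finsupp.sum_congr fun j hj => by
                by_cases hji : j = m
                · rw [if_pos hji, if_pos (by omega)]
                · rw [if_neg hji, if_neg (by omega)]
            rw [h2, Finsupp.sum_ite_eq']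
            simp [hmem]
          · rw [if_neg him]
            have h2 : (p.sum fun j b => if i + j = m + m then p i * b else 0) =
                p.sum fun j b => (0 : Octonion) :=
              Finsupp.sum_congr fun j hj => by
                rw [if_neg (by have h3 := hle i hi; have h4 := hle j hj; omega)]
            rw [h2]; exact Finset.sum_const_zero
        rw [Finsupp.sum_congr (g2 := fun i a => if i = m then p m * p m else 0)
          (fun i hi => by exact step1 i hi), Finsupp.sum_ite_eq']
        simp [hmem]
      have key2 : (p * p) (m + m) = 0 := by
        rw [h, Finsupp.sub_apply, Finsupp.smul_apply, Finsupp.smul_apply]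
        have h1 : p (m + m) = 0 :=
          Finsupp.notMem_support_iff.mp fun hc => by have := hle _ hc; omega
        have h2 : oneR (m + m) = 0 := by
          rw [oneR, Finsupp.single_apply, if_neg (by omega)]
        rw [h1, h2, smul_zero, smul_zero, sub_zero]
      have : p m = 0 := Octonion.eq_zero_of_sq_zero (by rw [← key, key2])
      exact (Finsupp.mem_support_iff.mp hmem) this
  · have : p = 0 := Finsupp.support_eq_empty.mp (Finset.not_nonempty_iff_eq_empty.mp hs)
    rw [this]; simp

/-- `σ` maps constants to constants -/
theorem sigma_const (hσ : IsAlgEndo σ) (e : Octonion) :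
    σ (Finsupp.single 0 e) = Finsupp.single 0 ((σ (Finsupp.single 0 e)) 0) := by
  apply const_of_quadratic (t := 2 * e.1.re)
    (n := Quaternion.normSq e.1 + Quaternion.normSq e.2)
  have h1 : (Finsupp.single 0 e : OctPoly) * Finsupp.single 0 e =
      (2 * e.1.re) • Finsupp.single 0 e -
        (Quaternion.normSq e.1 + Quaternion.normSq e.2) • oneR := by
    rw [single_mul_single, zero_add, Octonion.sq_eq, Finsupp.single_sub,
      ← Finsupp.smul_single, ← Finsupp.smul_single, oneR]
  have := congrArg σ h1
  rw [hσ.1, map_sub, hσ.2.2, hσ.2.2, hσ.2.1] at this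
  exact this

/-- `σ` on constants -/
noncomputable def sig0 (σ : OctPoly →+ OctPoly) (e : Octonion) : Octonion :=
  σ (Finsupp.single 0 e) 0

theorem sig0_spec (hσ : IsAlgEndo σ) (e : Octonion) :
    σ (Finsupp.single 0 e) = Finsupp.single 0 (sig0 σ e) := sigma_const hσ e

theorem sig0_mul (hσ : IsAlgEndo σ) (e f : Octonion) :
    sig0 σ (e * f) = sig0 σ e * sig0 σ f := by
  have h1 : (Finsupp.single 0 e : OctPoly) * Finsupp.single 0 f = Finsupp.single 0 (e * f) := by
    rw [single_mul_single]
  have := congrArg σ h1.symm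
  rw [hσ.1, sig0_spec hσ, sig0_spec hσ, sig0_spec hσ, single_mul_single] at this
  have := congrArg (fun p : OctPoly => p 0) this
  simpa using this

theorem sig0_surj (hσ : IsAlgEndo σ) : Function.Surjective (sig0 σ) := by
  have hadd : ∀ a b : Octonion, sig0 σ (a + b) = sig0 σ a + sig0 σ b := by
    intro a b
    unfold sig0
    rw [Finsupp.single_add, map_add, Finsupp.add_apply]
  have hsmul : ∀ (r : ℝ) (a : Octonion), sig0 σ (r • a) = r • sig0 σ a := by
    intro r a
    unfold sig0
    rw [← Finsupp.smul_single, hσ.2.2, Finsupp.smul_apply]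
  let L : Octonion →ₗ[ℝ] Octonion :=
    { toFun := sig0 σ, map_add' := hadd, map_smul' := hsmul }
  have hinj : Function.Injective L := by
    rw [injective_iff_map_eq_zero]
    intro e he
    have he' : sig0 σ e = 0 := he
    have h1 : (Finsupp.single 0 e : OctPoly) * Finsupp.single 0 (Octonion.conj e) =
        (Quaternion.normSq e.1 + Quaternion.normSq e.2) • oneR := by
      rw [single_mul_single, zero_add, Octonion.mul_conj, oneR, Finsupp.smul_single]
    have h2 := congrArg σ h1
    rw [hσ.1, hσ.2.2, hσ.2.1, sig0_spec hσ, sig0_spec hσ, he', Finsupp.single_zero,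
      zero_mul'] at h2
    have h3 := congrArg (fun p : OctPoly => p 0) h2
    simp only [Finsupp.coe_zero, Pi.zero_apply, Finsupp.smul_apply, oneR,
      Finsupp.single_eq_same] at h3
    have h4 : Quaternion.normSq e.1 + Quaternion.normSq e.2 = 0 := by
      rcases smul_eq_zero.mp h3.symm with h | h
      · exact h
      · exact absurd h Octonion.one_ne_zero'
    have h5 : Quaternion.normSq e.1 = 0 ∧ Quaternion.normSq e.2 = 0 := by
      constructor <;> nlinarith [Quaternion.normSq_nonneg (a := e.1),
        Quaternion.normSq_nonneg (a := e.2)]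
    exact Prod.ext (Quaternion.normSq_eq_zero.mp h5.1) (Quaternion.normSq_eq_zero.mp h5.2)
  exact LinearMap.injective_iff_surjective.mp hinj

theorem Yv_comm_const (e : Octonion) :
    Yv * Finsupp.single 0 e = (Finsupp.single 0 e : OctPoly) * Yv := by
  rw [Yv, single_mul_single, single_mul_single, Octonion.one_mul', Octonion.mul_one']

theorem sigma_Yv_real (hσ : IsAlgEndo σ) : RealP (σ Yv) := by
  intro k
  apply Octonion.real_of_comm
  intro u
  obtain ⟨e, rfl⟩ := sig0_surj hσ u
  have h1 := congrArg σ (Yv_comm_const e)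
  rw [hσ.1, hσ.1, sig0_spec hσ] at h1
  have h2 := congrArg (fun p : OctPoly => p k) h1
  simpa only [mul_single_zero_apply, single_zero_mul_apply] using h2

theorem delta_Yv_real (hσ : IsAlgEndo σ) (hδ : IsSigmaDerivation σ δ) : RealP (δ Yv) := by
  have hσY : RealP (σ Yv) := sigma_Yv_real hσ
  intro k
  apply Octonion.real_of_mid
  intro u v
  obtain ⟨e, rfl⟩ := sig0_surj hσ u
  have hassoc : ((Finsupp.single 0 e : OctPoly) * Yv) * Finsupp.single 0 v =
      (Finsupp.single 0 e : OctPoly) * (Yv * Finsupp.single 0 v) := by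
    simp [Yv, single_mul_single, Octonion.mul_one', Octonion.one_mul']
  have e1 : δ (((Finsupp.single 0 e : OctPoly) * Yv) * Finsupp.single 0 v) =
      (σ (Finsupp.single 0 e) * σ Yv) * δ (Finsupp.single 0 v) +
        ((σ (Finsupp.single 0 e) * δ Yv) * Finsupp.single 0 v +
          (δ (Finsupp.single 0 e) * Yv) * Finsupp.single 0 v) := by
    rw [hδ.1, hσ.1, hδ.1, add_mul']
  have e2 : δ ((Finsupp.single 0 e : OctPoly) * (Yv * Finsupp.single 0 v)) =
      σ (Finsupp.single 0 e) * (σ Yv * δ (Finsupp.single 0 v)) +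
        (σ (Finsupp.single 0 e) * (δ Yv * Finsupp.single 0 v) +
          δ (Finsupp.single 0 e) * (Yv * Finsupp.single 0 v)) := by
    rw [hδ.1, hδ.1, mul_add', add_assoc]
  have hkey := (e1.symm.trans ((congrArg δ hassoc).trans e2))
  rw [real_mid_assoc hσY, real_mid_assoc realP_Yv] at hkey
  have hkey2 := add_left_cancel hkey
  have hkey3 := add_right_cancel hkey2
  rw [sig0_spec hσ] at hkey3
  have h2 := congrArg (fun p : OctPoly => p k) hkey3
  simpa only [mul_single_zero_apply, single_zero_mul_apply] using h2

theorem delta_oneR (hσ : IsAlgEndo σ) (hδ : IsSigmaDerivation σ δ) : δ oneR = 0 := by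
  have h := hδ.1 oneR oneR
  rw [mul_oneR, hσ.2.1, oneR_mul, mul_oneR] at h
  have h2 : δ oneR + 0 = δ oneR + δ oneR := by rw [add_zero]; exact h
  exact (add_left_cancel h2).symm

theorem realP_sigma (hσ : IsAlgEndo σ) {p : OctPoly} (hp : RealP p) : RealP (σ p) := by
  have hY := sigma_Yv_real hσ
  have hyp : ∀ k, RealP (σ (ypow k)) := by
    intro k
    induction k with
    | zero =>
      show RealP (σ oneR)
      rw [hσ.2.1]; exact realP_oneR
    | succ k ih =>
      have : σ (ypow (k + 1)) = σ Yv * σ (ypow k) := by rw [ypow, hσ.1]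
      rw [this]; exact realP_mul hY ih
  refine realP_induction (P := fun p => RealP (σ p)) ?_ ?_ ?_ p hp
  · show RealP (σ 0)
    rw [map_zero]; exact realP_zero
  · intro k c hc
    obtain ⟨r, rfl⟩ := hc
    rw [single_real_eq, hσ.2.2]
    exact realP_smul r (hyp k)
  · intro p q _ _ ih1 ih2; rw [map_add]; exact realP_add ih1 ih2

theorem realP_delta (hσ : IsAlgEndo σ) (hδ : IsSigmaDerivation σ δ) {p : OctPoly}
    (hp : RealP p) : RealP (δ p) := by
  have hY := sigma_Yv_real hσ
  have hdY := delta_Yv_real hσ hδ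
  have hyp : ∀ k, RealP (δ (ypow k)) := by
    intro k
    induction k with
    | zero =>
      show RealP (δ oneR)
      rw [delta_oneR hσ hδ]; exact realP_zero
    | succ k ih =>
      have : δ (ypow (k + 1)) = σ Yv * δ (ypow k) + δ Yv * ypow k := by
        rw [ypow, hδ.1]
      rw [this]
      exact realP_add (realP_mul hY ih) (realP_mul hdY (realP_ypow k))
  refine realP_induction (P := fun p => RealP (δ p)) ?_ ?_ ?_ p hp
  · show RealP (δ 0)
    rw [map_zero]; exact realP_zero
  · intro k c hc
    obtain ⟨r, rfl⟩ := hc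
    rw [single_real_eq, hδ.2]
    exact realP_smul r (hyp k)
  · intro p q _ _ ih1 ih2; rw [map_add]; exact realP_add ih1 ih2

end OrePf
/-! ### the Ore extension layer -/

namespace OrePf

open OctPoly

variable {σ δ : OctPoly →+ OctPoly}

/-- left multiplication by a fixed `OctPoly` as an additive map -/
noncomputable def mulLeftHom (f : OctPoly) : OctPoly →+ OctPoly where
  toFun := (f * ·)
  map_zero' := OctPoly.mul_zero f
  map_add' := fun p q => mul_add' f p q

theorem mulLeftHom_apply (f p : OctPoly) : mulLeftHom f p = f * p := rfl

/-- real coefficients of an Ore polynomial -/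
def RealC (p : OrePoly) : Prop := ∀ i, RealP (p i)

theorem realC_zero : RealC 0 := fun _ => realP_zero

theorem realC_add {p q : OrePoly} (hp : RealC p) (hq : RealC q) : RealC (p + q) := fun i => by
  rw [Finsupp.add_apply]; exact realP_add (hp i) (hq i)

theorem realC_single {i : ℕ} {f : OctPoly} (hf : RealP f) : RealC (Finsupp.single i f) :=
  fun m => by
    rw [Finsupp.single_apply]
    split
    · exact hf
    · exact realP_zero

theorem realC_split {a : ℕ} {b : OctPoly} {f : OrePoly} (ha : a ∉ f.support)
    (h : RealC (Finsupp.single a b + f)) : RealP b ∧ RealC f := by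
  have hfa : f a = 0 := Finsupp.notMem_support_iff.mp ha
  constructor
  · have := h a
    rwa [Finsupp.add_apply, Finsupp.single_eq_same, hfa, add_zero] at this
  · intro k
    by_cases hk : k = a
    · rw [hk, hfa]; exact realP_zero
    · have := h k
      rwa [Finsupp.add_apply, Finsupp.single_eq_of_ne hk, zero_add] at this

theorem realC_induction {P : OrePoly → Prop} (h0 : P 0)
    (hsingle : ∀ (i : ℕ) (f : OctPoly), RealP f → P (Finsupp.single i f))
    (hadd : ∀ p q, RealC p → RealC q → P p → P q → P (p + q)) :
    ∀ p, RealC p → P p := by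
  intro p
  induction p using Finsupp.induction with
  | zero => exact fun _ => h0
  | single_add a b f ha hb ih =>
    intro hreal
    obtain ⟨hb', hf⟩ := realC_split ha hreal
    exact hadd _ _ (realC_single hb') hf (hsingle a b hb') (ih hf)

theorem oreInduction {P : OrePoly → Prop} (h0 : P 0)
    (hsingle : ∀ (i : ℕ) (f : OctPoly), P (Finsupp.single i f))
    (hadd : ∀ p q, P p → P q → P (p + q)) : ∀ p, P p := fun p =>
  Finsupp.induction p h0 fun a b f _ _ hf => hadd _ _ (hsingle a b) hf

/-! #### basic lemmas about `xmul` and `oreMul` -/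

theorem xmul_single (j : ℕ) (r : OctPoly) :
    xmul σ δ (Finsupp.single j r) =
      Finsupp.single (j + 1) (σ r) + Finsupp.single j (δ r) := by
  rw [xmul, Finsupp.liftAddHom_apply_single]
  rfl

theorem xmul_iter_add (i : ℕ) (p q : OrePoly) :
    (xmul σ δ)^[i] (p + q) = (xmul σ δ)^[i] p + (xmul σ δ)^[i] q := by
  induction i generalizing p q with
  | zero => rfl
  | succ i ih =>
    simp only [Function.iterate_succ_apply]
    rw [map_add, ih]

theorem xmul_iter_zero (i : ℕ) : (xmul σ δ)^[i] (0 : OrePoly) = 0 := by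
  induction i with
  | zero => rfl
  | succ i ih =>
    simp only [Function.iterate_succ_apply, map_zero]
    exact ih

theorem mapRange_zero_mul (w : OrePoly) :
    Finsupp.mapRange ((0 : OctPoly) * ·) (OctPoly.mul_zero 0) w = 0 := by
  ext k
  rw [Finsupp.mapRange_apply, zero_mul']
  rfl

theorem mapRange_add_mul (a b : OctPoly) (w : OrePoly) :
    Finsupp.mapRange ((a + b) * ·) (OctPoly.mul_zero (a + b)) w =
      Finsupp.mapRange (a * ·) (OctPoly.mul_zero a) w +
        Finsupp.mapRange (b * ·) (OctPoly.mul_zero b) w := by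
  ext k
  rw [Finsupp.add_apply, Finsupp.mapRange_apply, Finsupp.mapRange_apply,
    Finsupp.mapRange_apply, add_mul']

theorem oreMul_single (i : ℕ) (f : OctPoly) (q : OrePoly) :
    oreMul σ δ (Finsupp.single i f) q =
      Finsupp.mapRange (f * ·) (OctPoly.mul_zero f) ((xmul σ δ)^[i] q) := by
  rw [oreMul]
  exact Finsupp.sum_single_index (mapRange_zero_mul _)

theorem oreMul_zero_left (q : OrePoly) : oreMul σ δ 0 q = 0 := by
  rw [oreMul]; exact Finsupp.sum_zero_index

theorem oreMul_add_left (p p' q : OrePoly) :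
    oreMul σ δ (p + p') q = oreMul σ δ p q + oreMul σ δ p' q := by
  rw [oreMul, oreMul, oreMul]
  exact Finsupp.sum_add_index' (fun i => mapRange_zero_mul _)
    (fun i a a' => mapRange_add_mul a a' _)

theorem oreMul_add_right (p q q' : OrePoly) :
    oreMul σ δ p (q + q') = oreMul σ δ p q + oreMul σ δ p q' := by
  rw [oreMul, oreMul, oreMul, ← Finsupp.sum_add]
  congr 1; funext i a
  rw [xmul_iter_add]
  ext k
  simp only [Finsupp.mapRange_apply, Finsupp.add_apply, mul_add']

theorem oreMul_apply (p q : OrePoly) (k : ℕ) :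
    oreMul σ δ p q k = p.sum fun i a => a * ((xmul σ δ)^[i] q) k := by
  rw [oreMul, Finsupp.sum_apply]
  exact Finsupp.sum_congr fun i _ => Finsupp.mapRange_apply

/-- `x` commutes into products -/
theorem xmul_oreMul (hσ : IsAlgEndo σ) (hδ : IsSigmaDerivation σ δ) (p q : OrePoly) :
    xmul σ δ (oreMul σ δ p q) = oreMul σ δ (xmul σ δ p) q := by
  have key : ∀ (r : OctPoly) (w : OrePoly),
      xmul σ δ (Finsupp.mapRange (r * ·) (OctPoly.mul_zero r) w) =
        Finsupp.mapRange (σ r * ·) (OctPoly.mul_zero (σ r)) (xmul σ δ w) +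
          Finsupp.mapRange (δ r * ·) (OctPoly.mul_zero (δ r)) w := by
    intro r w
    induction w using oreInduction with
    | h0 =>
      simp only [Finsupp.mapRange_zero, map_zero, add_zero]
    | hsingle k s =>
      rw [Finsupp.mapRange_single, xmul_single, xmul_single,
        Finsupp.mapRange_add (fun x y => mul_add' (σ r) x y),
        Finsupp.mapRange_single, Finsupp.mapRange_single, Finsupp.mapRange_single,
        hσ.1, hδ.1, Finsupp.single_add]
      abel
    | hadd w w' ih ih' =>
      rw [Finsupp.mapRange_add (fun x y => mul_add' r x y), map_add, ih, ih', map_add,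
        Finsupp.mapRange_add (fun x y => mul_add' (σ r) x y),
        Finsupp.mapRange_add (fun x y => mul_add' (δ r) x y)]
      abel
  induction p using oreInduction with
  | h0 => simp only [oreMul_zero_left, map_zero]
  | hsingle j r =>
    rw [oreMul_single, xmul_single, oreMul_add_left, oreMul_single, oreMul_single,
      Function.iterate_succ_apply', key]
  | hadd p p' ih ih' =>
    rw [oreMul_add_left, map_add, map_add, ih, ih', oreMul_add_left]

theorem xmul_iter_oreMul (hσ : IsAlgEndo σ) (hδ : IsSigmaDerivation σ δ) (i : ℕ)
    (p q : OrePoly) :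
    (xmul σ δ)^[i] (oreMul σ δ p q) = oreMul σ δ ((xmul σ δ)^[i] p) q := by
  induction i generalizing p with
  | zero => rfl
  | succ i ih =>
    simp only [Function.iterate_succ_apply]
    rw [xmul_oreMul hσ hδ, ih]

theorem realC_xmul (hσ : IsAlgEndo σ) (hδ : IsSigmaDerivation σ δ) {p : OrePoly}
    (hp : RealC p) : RealC (xmul σ δ p) := by
  refine realC_induction (P := fun p => RealC (xmul σ δ p)) ?_ ?_ ?_ p hp
  · show RealC (xmul σ δ 0)
    simp only [map_zero]; exact realC_zero
  · intro i f hf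
    rw [xmul_single]
    exact realC_add (realC_single (realP_sigma hσ hf)) (realC_single (realP_delta hσ hδ hf))
  · intro p q _ _ ih1 ih2
    simp only [map_add]; exact realC_add ih1 ih2

theorem realC_xmul_iter (hσ : IsAlgEndo σ) (hδ : IsSigmaDerivation σ δ) (i : ℕ) {p : OrePoly}
    (hp : RealC p) : RealC ((xmul σ δ)^[i] p) := by
  induction i with
  | zero => exact hp
  | succ i ih => rw [Function.iterate_succ_apply']; exact realC_xmul hσ hδ ih

/-- pulling a real left factor out of an Ore product -/
theorem mapRange_real_oreMul {f : OctPoly} (hf : RealP f) (u c : OrePoly) :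
    Finsupp.mapRange (f * ·) (OctPoly.mul_zero f) (oreMul σ δ u c) =
      oreMul σ δ (Finsupp.mapRange (f * ·) (OctPoly.mul_zero f) u) c := by
  refine Finsupp.ext fun k => ?_
  rw [Finsupp.mapRange_apply, oreMul_apply, oreMul_apply,
    Finsupp.sum_mapRange_index (h := fun i g => g * (((xmul σ δ)^[i] c) k))
      (fun m => zero_mul' _), ← mulLeftHom_apply f,
    map_finsuppSum]
  refine Finsupp.sum_congr fun m _ => ?_
  rw [mulLeftHom_apply, real_left_assoc hf]

/-- pulling a left factor through a real-coefficient Ore polynomial -/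
theorem oreMul_mapRange_real {u : OrePoly} (hu : RealC u) (p : OctPoly) (c : OrePoly) :
    oreMul σ δ (Finsupp.mapRange (p * ·) (OctPoly.mul_zero p) u) c =
      Finsupp.mapRange (p * ·) (OctPoly.mul_zero p) (oreMul σ δ u c) := by
  refine Finsupp.ext fun k => ?_
  rw [Finsupp.mapRange_apply, oreMul_apply, oreMul_apply,
    Finsupp.sum_mapRange_index (h := fun i g => g * (((xmul σ δ)^[i] c) k))
      (fun m => zero_mul' _), ← mulLeftHom_apply p,
    map_finsuppSum]
  refine Finsupp.sum_congr fun m _ => ?_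
  rw [mulLeftHom_apply, real_mid_assoc (hu m)]

/-- pulling a left factor through when the right factor has real coefficients -/
theorem oreMul_mapRange_realRight (hσ : IsAlgEndo σ) (hδ : IsSigmaDerivation σ δ)
    {a : OrePoly} (ha : RealC a) (p : OctPoly) (u : OrePoly) :
    oreMul σ δ (Finsupp.mapRange (p * ·) (OctPoly.mul_zero p) u) a =
      Finsupp.mapRange (p * ·) (OctPoly.mul_zero p) (oreMul σ δ u a) := by
  refine Finsupp.ext fun k => ?_
  rw [Finsupp.mapRange_apply, oreMul_apply, oreMul_apply,
    Finsupp.sum_mapRange_index (h := fun i g => g * (((xmul σ δ)^[i] a) k))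
      (fun m => zero_mul' _), ← mulLeftHom_apply p,
    map_finsuppSum]
  refine Finsupp.sum_congr fun m _ => ?_
  rw [mulLeftHom_apply, real_right_assoc (realC_xmul_iter hσ hδ m ha k)]

end OrePf
open OrePf OctPoly in
/-- Let `R = 𝕆[y]`, `σ` an `ℝ`-algebra endomorphism of `R` with `deg_y (σ y) > 1`,
`δ` a `σ`-derivation, and `S = R[x; σ, δ]` the non-associative Ore extension.
If `a ∈ S` has positive degree in `x` and all its coefficients lie in `ℝ[y]`,
then `a` belongs to the nucleus `N(S)`. -/
theorem mem_nucleus_of_real_coeffs (σ δ : OctPoly →+ OctPoly)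
    (hσ : IsAlgEndo σ) (hσy : ((1 : ℕ) : WithBot ℕ) < (σ Yv).support.max)
    (hδ : IsSigmaDerivation σ δ)
    (a : OrePoly) (hdeg : ((0 : ℕ) : WithBot ℕ) < a.support.max)
    (hcoeff : ∀ i j : ℕ, Octonion.IsReal (a i j)) :
    OreNucleus σ δ a := by
  have ha : RealC a := fun i j => hcoeff i j
  refine ⟨?_, ?_, ?_⟩
  · intro b c
    refine realC_induction
      (P := fun a' => oreMul σ δ a' (oreMul σ δ b c) = oreMul σ δ (oreMul σ δ a' b) c)
      ?_ ?_ ?_ a ha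
    · show oreMul σ δ 0 (oreMul σ δ b c) = oreMul σ δ (oreMul σ δ 0 b) c
      rw [oreMul_zero_left, oreMul_zero_left, oreMul_zero_left]
    · intro i f hf
      show oreMul σ δ (Finsupp.single i f) (oreMul σ δ b c) =
        oreMul σ δ (oreMul σ δ (Finsupp.single i f) b) c
      rw [oreMul_single, xmul_iter_oreMul hσ hδ, mapRange_real_oreMul hf,
        ← oreMul_single]
    · intro p q _ _ ih1 ih2
      show oreMul σ δ (p + q) (oreMul σ δ b c) = oreMul σ δ (oreMul σ δ (p + q) b) c
      rw [oreMul_add_left, oreMul_add_left, ih1, ih2, oreMul_add_left]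
  · intro b c
    refine oreInduction
      (P := fun b' => oreMul σ δ (oreMul σ δ b' a) c = oreMul σ δ b' (oreMul σ δ a c))
      ?_ ?_ ?_ b
    · show oreMul σ δ (oreMul σ δ 0 a) c = oreMul σ δ 0 (oreMul σ δ a c)
      rw [oreMul_zero_left, oreMul_zero_left, oreMul_zero_left]
    · intro m p
      show oreMul σ δ (oreMul σ δ (Finsupp.single m p) a) c =
        oreMul σ δ (Finsupp.single m p) (oreMul σ δ a c)
      rw [oreMul_single, oreMul_single, xmul_iter_oreMul hσ hδ,
        oreMul_mapRange_real (realC_xmul_iter hσ hδ m ha) p c]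
    · intro p q ih1 ih2
      show oreMul σ δ (oreMul σ δ (p + q) a) c = oreMul σ δ (p + q) (oreMul σ δ a c)
      rw [oreMul_add_left, oreMul_add_left, ih1, ih2, oreMul_add_left]
  · intro b c
    refine oreInduction
      (P := fun b' => oreMul σ δ (oreMul σ δ b' c) a = oreMul σ δ b' (oreMul σ δ c a))
      ?_ ?_ ?_ b
    · show oreMul σ δ (oreMul σ δ 0 c) a = oreMul σ δ 0 (oreMul σ δ c a)
      rw [oreMul_zero_left, oreMul_zero_left, oreMul_zero_left]
    · intro m p
      show oreMul σ δ (oreMul σ δ (Finsupp.single m p) c) a =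
        oreMul σ δ (Finsupp.single m p) (oreMul σ δ c a)
      rw [oreMul_single, oreMul_single, xmul_iter_oreMul hσ hδ,
        oreMul_mapRange_realRight hσ hδ ha p _]
    · intro p q ih1 ih2
      show oreMul σ δ (oreMul σ δ (p + q) c) a = oreMul σ δ (p + q) (oreMul σ δ c a)
      rw [oreMul_add_left, oreMul_add_left, ih1, ih2, oreMul_add_left]
end
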